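/- arXiv:2506.04476 — 7 statements merged into one kernel-verified Lean document; each statement's English description precedes it below -/
import Mathlib

section
/- Let C_{w,f} be a weighted composition operator on L^p(μ) (1 ≤ p < ∞), where f : X → X is bimeasurable, w : X → 𝕂 is measurable, multiplication by w maps L^p(μ) into itself, and there is c > 0 with ∫_B |w|^p dμ ≤ c μ(f(B)) for all measurable B. Then for every n ∈ ℕ, ‖(C_{w,f})^n‖ = sup over measurable sets B with 0 < μ(B) < ∞ of (μ_n(f^{-n}(B))/μ(B))^{1/p}, where μ_n(B) = ∫_B |w^{(n)}|^p dμ and w^{(n)} = (w∘f^{n-1})⋯(w∘f)·w. -/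
open MeasureTheory
open scoped ENNReal

theorem lemA {X : Type*} [MeasurableSpace X] (ν μ : Measure X) (K : ℝ≥0∞)
    (g : X → ℝ≥0∞) (hg : Measurable g) (hgfin : ∫⁻ x, g x ∂μ ≠ ⊤)
    (hle : ∀ A : Set X, MeasurableSet A → μ A < ⊤ → ν A ≤ K * μ A) :
    ∫⁻ x, g x ∂ν ≤ K * ∫⁻ x, g x ∂μ := by
  rw [lintegral_eq_iSup_eapprox_lintegral hg]
  refine iSup_le fun k => ?_
  set s := SimpleFunc.eapprox g k with hs
  have hsle : ∀ x, s x ≤ g x := fun x =>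
    (le_iSup (fun n => (SimpleFunc.eapprox g n) x) k).trans
      (SimpleFunc.iSup_eapprox_apply hg x).le
  have hsint : s.lintegral μ ≤ ∫⁻ x, g x ∂μ := by
    rw [← SimpleFunc.lintegral_eq_lintegral]
    exact lintegral_mono hsle
  calc s.lintegral ν = ∑ a ∈ s.range, a * ν (⇑s ⁻¹' {a}) := rfl
    _ ≤ ∑ a ∈ s.range, K * (a * μ (⇑s ⁻¹' {a})) := by
        refine Finset.sum_le_sum fun a hmem => ?_
        rcases eq_or_ne a 0 with rfl | ha
        · simp
        · have hfin : μ (⇑s ⁻¹' {a}) < ⊤ := by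
            have h1 : a * μ (⇑s ⁻¹' {a}) ≤ s.lintegral μ :=
              Finset.single_le_sum (f := fun b => b * μ (⇑s ⁻¹' {b}))
                (fun b _ => zero_le) hmem
            have h2 : a * μ (⇑s ⁻¹' {a}) ≠ ⊤ := ((h1.trans hsint).trans_lt hgfin.lt_top).ne
            refine lt_top_iff_ne_top.mpr fun h => h2 ?_
            rw [h, ENNReal.mul_top ha]
          calc a * ν (⇑s ⁻¹' {a}) ≤ a * (K * μ (⇑s ⁻¹' {a})) := by
                gcongr
                exact hle _ (s.measurableSet_fiber a) hfin
            _ = K * (a * μ (⇑s ⁻¹' {a})) := by ring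
    _ = K * ∑ a ∈ s.range, a * μ (⇑s ⁻¹' {a}) := by rw [Finset.mul_sum]
    _ = K * s.lintegral μ := rfl
    _ ≤ K * ∫⁻ x, g x ∂μ := by gcongr

-- Lemma D
theorem lemD {X : Type*} [MeasurableSpace X] (μ : Measure X)
    (f : X → X) (hf : Measurable f)
    (hf' : ∀ B : Set X, MeasurableSet B → MeasurableSet (f '' B))
    (wp : X → ℝ≥0∞) (hwp : Measurable wp) (c : ℝ≥0∞)
    (hbound : ∀ B : Set X, MeasurableSet B → ∫⁻ x in B, wp x ∂μ ≤ c * μ (f '' B))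
    (g : X → ℝ≥0∞) (hg : Measurable g) (B : Set X) (hB : MeasurableSet B) :
    ∫⁻ x in B, g (f x) * wp x ∂μ ≤ c * ∫⁻ y in f '' B, g y ∂μ := by
  revert B
  refine Measurable.ennreal_induction (motive := fun g => ∀ B : Set X, MeasurableSet B →
    ∫⁻ x in B, g (f x) * wp x ∂μ ≤ c * ∫⁻ y in f '' B, g y ∂μ) ?_ ?_ ?_ hg
  · intro a s hs B hB
    have h1 : ∀ x, (s.indicator fun _ => a) (f x) * wp x
        = (f ⁻¹' s).indicator (fun x => a * wp x) x := by
      intro x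
      by_cases hx : f x ∈ s <;> simp [Set.indicator, hx]
    simp only [h1]
    rw [lintegral_indicator (hf hs), Measure.restrict_restrict (hf hs)]
    rw [lintegral_const_mul _ hwp]
    have h2 : ∫⁻ y in f '' B, (s.indicator fun _ => a) y ∂μ = a * μ (f '' B ∩ s) := by
      rw [lintegral_indicator hs, Measure.restrict_restrict hs, lintegral_const,
        Measure.restrict_apply MeasurableSet.univ, Set.univ_inter, Set.inter_comm]
    rw [h2]
    have h3 : ∫⁻ x in f ⁻¹' s ∩ B, wp x ∂μ ≤ c * μ (f '' B ∩ s) := by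
      refine (hbound _ ((hf hs).inter hB)).trans ?_
      gcongr
      rintro y ⟨x, ⟨hxs, hxB⟩, rfl⟩
      exact ⟨⟨x, hxB, rfl⟩, hxs⟩
    calc a * ∫⁻ x in f ⁻¹' s ∩ B, wp x ∂μ ≤ a * (c * μ (f '' B ∩ s)) := by gcongr
      _ = c * (a * μ (f '' B ∩ s)) := by ring
  · intro g₁ g₂ _ hg₁ hg₂ h₁ h₂ B hB
    simp only [Pi.add_apply, add_mul]
    rw [lintegral_add_left (f := fun x => g₁ (f x) * wp x) ((hg₁.comp hf).mul hwp),
      lintegral_add_left (f := fun y => g₁ y) hg₁, mul_add]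
    exact add_le_add (h₁ B hB) (h₂ B hB)
  · intro gs hgs hmono hP B hB
    have heq : ∀ x, (fun x => ⨆ k, gs k x) (f x) * wp x = ⨆ k, gs k (f x) * wp x := by
      intro x; exact ENNReal.iSup_mul (fun k => gs k (f x)) (wp x)
    simp only [heq]
    rw [lintegral_iSup (f := fun k x => gs k (f x) * wp x)
      (fun k => ((hgs k).comp hf).mul hwp)
      (fun i j hij x => mul_le_mul_left (hmono hij _) _)]
    rw [lintegral_iSup (f := fun k y => gs k y) hgs hmono]
    rw [ENNReal.mul_iSup]
    exact iSup_mono fun k => hP k B hB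

-- product recursion
theorem lemWp {X : Type*} (f : X → X) (w : X → ℝ) (p : ℝ) (hp : 0 < p) (n : ℕ) (x : X) :
    ENNReal.ofReal (|∏ j ∈ Finset.range (n+1), w (f^[j] x)| ^ p)
      = ENNReal.ofReal (|∏ j ∈ Finset.range n, w (f^[j] (f x))| ^ p)
        * ENNReal.ofReal (|w x| ^ p) := by
  rw [Finset.prod_range_succ' (fun j => w (f^[j] x)) n]
  simp only [Function.iterate_succ_apply, Function.iterate_zero_apply]
  rw [abs_mul, Real.mul_rpow (abs_nonneg _) (abs_nonneg _),
    ENNReal.ofReal_mul (Real.rpow_nonneg (abs_nonneg _) _)]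

theorem lemWpmeas {X : Type*} [MeasurableSpace X] (f : X → X) (hf : Measurable f)
    (w : X → ℝ) (hw : Measurable w) (p : ℝ) (n : ℕ) :
    Measurable fun x => ENNReal.ofReal (|∏ j ∈ Finset.range n, w (f^[j] x)| ^ p) := by
  apply ENNReal.measurable_ofReal.comp
  apply Measurable.pow_const
  apply Measurable.abs
  exact Finset.measurable_prod _ fun j _ => hw.comp (hf.iterate j)

-- Lemma C
theorem lemC {X : Type*} [MeasurableSpace X] (μ : Measure X)
    (f : X → X) (hf : Measurable f)
    (hf' : ∀ B : Set X, MeasurableSet B → MeasurableSet (f '' B))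
    (w : X → ℝ) (hw : Measurable w) (p : ℝ) (hp : 0 < p) (c : ℝ≥0∞)
    (hbound : ∀ B : Set X, MeasurableSet B →
      ∫⁻ x in B, ENNReal.ofReal (|w x| ^ p) ∂μ ≤ c * μ (f '' B))
    (n : ℕ) (B : Set X) (hB : MeasurableSet B) :
    ∫⁻ x in B, ENNReal.ofReal (|∏ j ∈ Finset.range n, w (f^[j] x)| ^ p) ∂μ
      ≤ c ^ n * μ (f^[n] '' B) := by
  induction n generalizing B with
  | zero => simp [Real.one_rpow]
  | succ n ih =>
    have h1 : ∫⁻ x in B, ENNReal.ofReal (|∏ j ∈ Finset.range (n+1), w (f^[j] x)| ^ p) ∂μ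
        = ∫⁻ x in B, (fun y => ENNReal.ofReal (|∏ j ∈ Finset.range n, w (f^[j] y)| ^ p)) (f x)
            * ENNReal.ofReal (|w x| ^ p) ∂μ := by
      refine lintegral_congr fun x => ?_
      exact lemWp f w p hp n x
    rw [h1]
    refine (lemD μ f hf hf' _ (ENNReal.measurable_ofReal.comp (hw.abs.pow_const p)) c hbound
      _ (lemWpmeas f hf w hw p n) B hB).trans ?_
    calc c * ∫⁻ y in f '' B, ENNReal.ofReal (|∏ j ∈ Finset.range n, w (f^[j] y)| ^ p) ∂μ
        ≤ c * (c ^ n * μ (f^[n] '' (f '' B))) := by gcongr; exact ih _ (hf' B hB)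
      _ = c ^ (n+1) * μ (f^[n+1] '' B) := by
          rw [Set.image_image]
          have : (fun x => f^[n] (f x)) '' B = f^[n+1] '' B := by
            apply Set.image_congr fun x _ => ?_
            exact (Function.iterate_succ_apply f n x).symm
          rw [this, pow_succ, mul_comm (c^n) c, mul_assoc]

-- Lemma E
theorem lemE {X : Type*} [MeasurableSpace X] (μ : Measure X)
    (f : X → X) (hf : Measurable f)
    (hf' : ∀ B : Set X, MeasurableSet B → MeasurableSet (f '' B))
    (w : X → ℝ) (hw : Measurable w) (p : ℝ) (hp : 0 < p) (c : ℝ≥0∞) (hc : c ≠ ⊤)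
    (hbound : ∀ B : Set X, MeasurableSet B →
      ∫⁻ x in B, ENNReal.ofReal (|w x| ^ p) ∂μ ≤ c * μ (f '' B))
    (n : ℕ) (t : Set X) (ht : μ t = 0) :
    ∀ᵐ x ∂μ, f^[n] x ∈ t → (∏ j ∈ Finset.range n, w (f^[j] x)) = 0 := by
  obtain ⟨N, htN, hNm, hN0⟩ := exists_measurable_superset_of_null ht
  have hint : ∫⁻ x in f^[n] ⁻¹' N, ENNReal.ofReal (|∏ j ∈ Finset.range n, w (f^[j] x)| ^ p) ∂μ = 0 := by
    refine le_antisymm ?_ zero_le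
    refine (lemC μ f hf hf' w hw p hp c hbound n _ ((hf.iterate n) hNm)).trans ?_
    have h1 : μ (f^[n] '' (f^[n] ⁻¹' N)) = 0 :=
      measure_mono_null (Set.image_preimage_subset _ _) hN0
    rw [h1, mul_zero]
  rw [setLIntegral_eq_zero_iff ((hf.iterate n) hNm) (lemWpmeas f hf w hw p n)] at hint
  filter_upwards [hint] with x hx hmem
  have hx' := hx (htN hmem)
  have h2 : |∏ j ∈ Finset.range n, w (f^[j] x)| ^ p = 0 := by
    have := ENNReal.ofReal_eq_zero.mp hx'
    exact le_antisymm this (Real.rpow_nonneg (abs_nonneg _) _)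
  have h3 : |∏ j ∈ Finset.range n, w (f^[j] x)| = 0 := by
    by_contra h
    exact h ((Real.rpow_eq_zero (abs_nonneg _) hp.ne').mp h2)
  exact abs_eq_zero.mp h3

-- Lemma B
theorem lemB {X : Type*} [MeasurableSpace X] (μ : Measure X)
    (p : ℝ) (hp : 0 < p) [Fact (1 ≤ ENNReal.ofReal p)]
    (f : X → X) (hf : Measurable f)
    (hf' : ∀ B : Set X, MeasurableSet B → MeasurableSet (f '' B))
    (w : X → ℝ) (hw : Measurable w) (c : ℝ≥0∞) (hc : c ≠ ⊤)
    (hbound : ∀ B : Set X, MeasurableSet B →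
      ∫⁻ x in B, ENNReal.ofReal (|w x| ^ p) ∂μ ≤ c * μ (f '' B))
    (T : Lp ℝ (ENNReal.ofReal p) μ →L[ℝ] Lp ℝ (ENNReal.ofReal p) μ)
    (hT : ∀ φ : Lp ℝ (ENNReal.ofReal p) μ, (T φ : X → ℝ) =ᵐ[μ] fun x => φ (f x) * w x)
    (n : ℕ) (φ : Lp ℝ (ENNReal.ofReal p) μ) :
    ((T ^ n) φ : X → ℝ) =ᵐ[μ] fun x => φ (f^[n] x) * ∏ j ∈ Finset.range n, w (f^[j] x) := by
  induction n generalizing φ with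
  | zero =>
    simp only [pow_zero, ContinuousLinearMap.one_apply, Function.iterate_zero_apply,
      Finset.range_zero, Finset.prod_empty, mul_one]
    exact Filter.EventuallyEq.refl _ _
  | succ n ih =>
    have h1 : ((T ^ (n+1)) φ : X → ℝ) = ((T ^ n) (T φ) : X → ℝ) := by
      rw [pow_succ, ContinuousLinearMap.mul_apply]
    rw [h1]
    refine (ih (T φ)).trans ?_
    -- now compare (Tφ)(f^[n] x) * W_n x with φ(f^[n+1] x) * W_{n+1} x
    have hTφ := hT φ
    set t : Set X := {y | (T φ : X → ℝ) y ≠ φ (f y) * w y} with hts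
    have ht : μ t = 0 := hTφ
    have hE := lemE μ f hf hf' w hw p hp c hc hbound n t ht
    filter_upwards [hE] with x hx
    by_cases hmem : f^[n] x ∈ t
    · have hW : (∏ j ∈ Finset.range n, w (f^[j] x)) = 0 := hx hmem
      rw [hW, mul_zero, Finset.prod_range_succ, hW, zero_mul, mul_zero]
    · have heq : (T φ : X → ℝ) (f^[n] x) = φ (f (f^[n] x)) * w (f^[n] x) := by
        simpa [hts] using not_ne_iff.mp (fun h => hmem h)
      rw [heq, Finset.prod_range_succ, Function.iterate_succ_apply']
      ring

/-- For a weighted composition operator `C_{w,f}` on `L^p(μ)`,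
`‖(C_{w,f})^n‖ = sup_{0 < μ B < ∞} (μ_n(f^{-n}(B)) / μ B)^{1/p}`, where
`μ_n(B) = ∫_B |w^{(n)}|^p dμ` and `w^{(n)} = (w∘f^{n-1})⋯(w∘f)·w`. -/
theorem stmt3 {X : Type*} [MeasurableSpace X] (μ : Measure X)
    (p : ℝ) (hp : 1 ≤ p) [Fact (1 ≤ ENNReal.ofReal p)]
    (f : X → X) (hf : Measurable f)
    (hf' : ∀ B : Set X, MeasurableSet B → MeasurableSet (f '' B))
    (w : X → ℝ) (hw : Measurable w)
    (hmul : ∀ φ : Lp ℝ (ENNReal.ofReal p) μ, MemLp (fun x => φ x * w x) (ENNReal.ofReal p) μ)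
    (c : ℝ) (hc : 0 < c)
    (hbound : ∀ B : Set X, MeasurableSet B →
      ∫⁻ x in B, ENNReal.ofReal (|w x| ^ p) ∂μ ≤ ENNReal.ofReal c * μ (f '' B))
    (T : Lp ℝ (ENNReal.ofReal p) μ →L[ℝ] Lp ℝ (ENNReal.ofReal p) μ)
    (hT : ∀ φ : Lp ℝ (ENNReal.ofReal p) μ, (T φ : X → ℝ) =ᵐ[μ] fun x => φ (f x) * w x)
    (n : ℕ) (hn : 1 ≤ n) :
    ‖T ^ n‖ = ⨆ B : {B : Set X // MeasurableSet B ∧ 0 < μ B ∧ μ B ≠ ⊤},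
      ((∫⁻ x in (f^[n]) ⁻¹' B.1,
          ENNReal.ofReal (|∏ j ∈ Finset.range n, w (f^[j] x)| ^ p) ∂μ) / μ B.1).toReal
        ^ (1 / p) := by
  have hp0 : 0 < p := lt_of_lt_of_le one_pos hp
  have hq0 : ENNReal.ofReal p ≠ 0 := by
    simp [ENNReal.ofReal_eq_zero, not_le, hp0]
  have hqt : ENNReal.ofReal p ≠ ⊤ := ENNReal.ofReal_ne_top
  have hqr : (ENNReal.ofReal p).toReal = p := ENNReal.toReal_ofReal hp0.le
  have hct : ENNReal.ofReal c ≠ ⊤ := ENNReal.ofReal_ne_top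
  set Wp : X → ℝ≥0∞ := fun x => ENNReal.ofReal (|∏ j ∈ Finset.range n, w (f^[j] x)| ^ p)
    with hWpdef
  have hWp : Measurable Wp := lemWpmeas f hf w hw p n
  set ν : Measure X := (μ.withDensity Wp).map f^[n] with hνdef
  have hνB : ∀ B : Set X, MeasurableSet B → ν B = ∫⁻ x in f^[n] ⁻¹' B, Wp x ∂μ := by
    intro B hB
    rw [hνdef, Measure.map_apply (hf.iterate n) hB,
      withDensity_apply _ ((hf.iterate n) hB)]
  have hνle : ∀ B : Set X, MeasurableSet B → ν B ≤ (ENNReal.ofReal c) ^ n * μ B := by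
    intro B hB
    rw [hνB B hB]
    refine (lemC μ f hf hf' w hw p hp0 _ hbound n _ ((hf.iterate n) hB)).trans ?_
    gcongr
    exact Set.image_preimage_subset _ _
  have hν_ac : ν ≪ μ := by
    refine Measure.absolutelyContinuous_of_le_smul (c := (ENNReal.ofReal c) ^ n) ?_
    rw [Measure.le_iff]
    intro s hs
    simpa using hνle s hs
  have hνfin : ∀ B : Set X, MeasurableSet B → μ B ≠ ⊤ → ν B ≠ ⊤ := by
    intro B hB hBt
    refine ((hνle B hB).trans_lt ?_).ne
    exact ENNReal.mul_lt_top (ENNReal.pow_ne_top hct).lt_top hBt.lt_top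
  -- norm formula
  have hconv : ∀ ψ : Lp ℝ (ENNReal.ofReal p) μ,
      ∫⁻ x, ‖ψ x‖ₑ ^ p ∂μ = ∫⁻ x, ENNReal.ofReal (|ψ x| ^ p) ∂μ := by
    intro ψ
    refine lintegral_congr fun x => ?_
    rw [← ofReal_norm, Real.norm_eq_abs,
      ENNReal.ofReal_rpow_of_nonneg (abs_nonneg _) hp0.le]
  have hnorm : ∀ ψ : Lp ℝ (ENNReal.ofReal p) μ,
      ‖ψ‖ = ((∫⁻ x, ENNReal.ofReal (|ψ x| ^ p) ∂μ) ^ (1/p)).toReal := by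
    intro ψ
    rw [Lp.norm_def, eLpNorm_eq_lintegral_rpow_enorm_toReal hq0 hqt, hqr, hconv ψ]
  have hintfin : ∀ ψ : Lp ℝ (ENNReal.ofReal p) μ,
      ∫⁻ x, ENNReal.ofReal (|ψ x| ^ p) ∂μ ≠ ⊤ := by
    intro ψ
    intro htop
    have h1 := Lp.eLpNorm_ne_top ψ
    rw [eLpNorm_eq_lintegral_rpow_enorm_toReal hq0 hqt, hqr, hconv ψ, htop,
      ENNReal.top_rpow_of_pos (by positivity)] at h1
    exact h1 rfl
  -- key identity
  have key : ∀ φ : Lp ℝ (ENNReal.ofReal p) μ, ∃ g : X → ℝ≥0∞, Measurable g ∧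
      (g =ᵐ[μ] fun y => ENNReal.ofReal (|φ y| ^ p)) ∧
      ∫⁻ x, ENNReal.ofReal (|((T ^ n) φ) x| ^ p) ∂μ = ∫⁻ y, g y ∂ν := by
    intro φ
    set φ' : X → ℝ := (Lp.aestronglyMeasurable φ).mk _ with hφ'def
    have hφ'meas : Measurable φ' := (Lp.aestronglyMeasurable φ).stronglyMeasurable_mk.measurable
    have hφ' : (φ : X → ℝ) =ᵐ[μ] φ' := (Lp.aestronglyMeasurable φ).ae_eq_mk
    have hgmeas : Measurable fun y => ENNReal.ofReal (|φ' y| ^ p) :=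
      ENNReal.measurable_ofReal.comp (hφ'meas.abs.pow_const p)
    refine ⟨fun y => ENNReal.ofReal (|φ' y| ^ p), hgmeas, ?_, ?_⟩
    · filter_upwards [hφ'] with y hy
      rw [hy]
    · have e1 : ∫⁻ x, ENNReal.ofReal (|((T ^ n) φ) x| ^ p) ∂μ
          = ∫⁻ x, ENNReal.ofReal (|φ (f^[n] x) * ∏ j ∈ Finset.range n, w (f^[j] x)| ^ p) ∂μ := by
        refine lintegral_congr_ae ?_
        filter_upwards [lemB μ p hp0 f hf hf' w hw _ hct hbound T hT n φ] with x hx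
        rw [hx]
      have e2 : ∫⁻ x, ENNReal.ofReal (|φ (f^[n] x) * ∏ j ∈ Finset.range n, w (f^[j] x)| ^ p) ∂μ
          = ∫⁻ x, ENNReal.ofReal (|φ' (f^[n] x)| ^ p) * Wp x ∂μ := by
        refine lintegral_congr_ae ?_
        have ht : μ {y | (φ : X → ℝ) y ≠ φ' y} = 0 := hφ'
        filter_upwards [lemE μ f hf hf' w hw p hp0 _ hct hbound n _ ht] with x hx
        rw [abs_mul, Real.mul_rpow (abs_nonneg _) (abs_nonneg _),
          ENNReal.ofReal_mul (Real.rpow_nonneg (abs_nonneg _) _)]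
        by_cases hmem : f^[n] x ∈ {y | (φ : X → ℝ) y ≠ φ' y}
        · have hW := hx hmem
          rw [hWpdef]
          simp only [hW, abs_zero, Real.zero_rpow hp0.ne', ENNReal.ofReal_zero,
            mul_zero]
        · have : (φ : X → ℝ) (f^[n] x) = φ' (f^[n] x) := not_ne_iff.mp hmem
          rw [this, hWpdef]
      have e3 : ∫⁻ x, ENNReal.ofReal (|φ' (f^[n] x)| ^ p) * Wp x ∂μ
          = ∫⁻ x, ENNReal.ofReal (|φ' (f^[n] x)| ^ p) ∂(μ.withDensity Wp) := by
        rw [lintegral_withDensity_eq_lintegral_mul μ hWp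
          (g := fun x => ENNReal.ofReal (|φ' (f^[n] x)| ^ p)) (hgmeas.comp (hf.iterate n))]
        refine lintegral_congr fun x => ?_
        simp [mul_comm]
      have e4 : ∫⁻ y, ENNReal.ofReal (|φ' y| ^ p) ∂ν
          = ∫⁻ x, ENNReal.ofReal (|φ' (f^[n] x)| ^ p) ∂(μ.withDensity Wp) :=
        lintegral_map (f := fun y => ENNReal.ofReal (|φ' y| ^ p)) hgmeas (hf.iterate n)
      rw [e1, e2, e3, ← e4]
  -- rewrite goal in terms of ν
  have hgoal : (⨆ B : {B : Set X // MeasurableSet B ∧ 0 < μ B ∧ μ B ≠ ⊤},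
      ((∫⁻ x in (f^[n]) ⁻¹' B.1, Wp x ∂μ) / μ B.1).toReal ^ (1 / p))
      = ⨆ B : {B : Set X // MeasurableSet B ∧ 0 < μ B ∧ μ B ≠ ⊤},
        ((ν B.1 / μ B.1).toReal) ^ (1 / p) :=
    iSup_congr fun B => by rw [hνB B.1 B.2.1]
  rw [show (⨆ B : {B : Set X // MeasurableSet B ∧ 0 < μ B ∧ μ B ≠ ⊤},
      ((∫⁻ x in (f^[n]) ⁻¹' B.1, Wp x ∂μ) / μ B.1).toReal ^ (1 / p))
      = ⨆ B : {B : Set X // MeasurableSet B ∧ 0 < μ B ∧ μ B ≠ ⊤},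
        ((ν B.1 / μ B.1).toReal) ^ (1 / p) from hgoal]
  set S : ℝ := ⨆ B : {B : Set X // MeasurableSet B ∧ 0 < μ B ∧ μ B ≠ ⊤},
    ((ν B.1 / μ B.1).toReal) ^ (1 / p) with hSdef
  have hterm : ∀ B : {B : Set X // MeasurableSet B ∧ 0 < μ B ∧ μ B ≠ ⊤},
      ((ν B.1 / μ B.1).toReal) ^ (1 / p)
        ≤ (((ENNReal.ofReal c) ^ n).toReal) ^ (1 / p) := by
    intro B
    have h := ENNReal.div_le_of_le_mul (hνle B.1 B.2.1)
    have h2 := ENNReal.toReal_mono (ENNReal.pow_ne_top hct) h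
    exact Real.rpow_le_rpow ENNReal.toReal_nonneg h2 (by positivity)
  have hbdd : BddAbove (Set.range fun B : {B : Set X // MeasurableSet B ∧ 0 < μ B ∧ μ B ≠ ⊤} =>
      ((ν B.1 / μ B.1).toReal) ^ (1 / p)) := by
    refine ⟨(((ENNReal.ofReal c) ^ n).toReal) ^ (1 / p), ?_⟩
    rintro _ ⟨B, rfl⟩
    exact hterm B
  have hS0 : 0 ≤ S := Real.iSup_nonneg fun B => Real.rpow_nonneg ENNReal.toReal_nonneg _
  refine le_antisymm ?_ ?_
  · -- ‖T^n‖ ≤ S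
    refine ContinuousLinearMap.opNorm_le_bound _ hS0 fun φ => ?_
    obtain ⟨g, hg, hgae, hkey⟩ := key φ
    have hgint : ∫⁻ x, g x ∂μ = ∫⁻ x, ENNReal.ofReal (|φ x| ^ p) ∂μ := lintegral_congr_ae hgae
    have hKle : ∀ A : Set X, MeasurableSet A → μ A < ⊤ → ν A ≤ ENNReal.ofReal (S ^ p) * μ A := by
      intro A hA hAfin
      rcases eq_or_ne (μ A) 0 with h0 | h0
      · have hν0 : ν A = 0 := le_antisymm (by simpa [h0] using hνle A hA) zero_le
        rw [hν0]
        exact zero_le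
      · have hx : ((ν A / μ A).toReal) ^ (1 / p) ≤ S :=
          le_ciSup hbdd ⟨A, hA, pos_iff_ne_zero.mpr h0, hAfin.ne⟩
        have hx2 : (ν A / μ A).toReal ≤ S ^ p := by
          have h3 := Real.rpow_le_rpow (Real.rpow_nonneg ENNReal.toReal_nonneg _) hx hp0.le
          rwa [← Real.rpow_mul ENNReal.toReal_nonneg, one_div_mul_cancel hp0.ne',
            Real.rpow_one] at h3
        have hdivt : ν A / μ A ≠ ⊤ := (ENNReal.div_lt_top (hνfin A hA hAfin.ne) h0).ne
        have hx3 : ν A / μ A ≤ ENNReal.ofReal (S ^ p) := by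
          rw [← ENNReal.ofReal_toReal hdivt]
          exact ENNReal.ofReal_le_ofReal hx2
        calc ν A = ν A / μ A * μ A := (ENNReal.div_mul_cancel h0 hAfin.ne).symm
          _ ≤ ENNReal.ofReal (S ^ p) * μ A := mul_le_mul_left hx3 _
    have hmain : ∫⁻ y, g y ∂ν ≤ ENNReal.ofReal (S ^ p) * ∫⁻ x, g x ∂μ :=
      lemA ν μ _ g hg (by rw [hgint]; exact hintfin φ) hKle
    rw [hgint] at hmain
    rw [hnorm ((T ^ n) φ), hkey, hnorm φ]
    set I : ℝ≥0∞ := ∫⁻ x, ENNReal.ofReal (|φ x| ^ p) ∂μ with hIdef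
    have h5 : (∫⁻ y, g y ∂ν) ^ (1 / p) ≤ (ENNReal.ofReal (S ^ p) * I) ^ (1 / p) :=
      ENNReal.rpow_le_rpow hmain (by positivity)
    have h6 : (ENNReal.ofReal (S ^ p) * I) ^ (1 / p) = ENNReal.ofReal S * I ^ (1 / p) := by
      rw [ENNReal.mul_rpow_of_nonneg _ _ (by positivity : (0:ℝ) ≤ 1 / p)]
      congr 1
      rw [ENNReal.ofReal_rpow_of_nonneg (by positivity : (0:ℝ) ≤ S ^ p)
        (by positivity : (0:ℝ) ≤ 1 / p)]
      congr 1
      rw [← Real.rpow_mul hS0, mul_one_div_cancel hp0.ne', Real.rpow_one]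
    have h7 : (ENNReal.ofReal S * I ^ (1 / p)) ≠ ⊤ :=
      ENNReal.mul_ne_top ENNReal.ofReal_ne_top
        (ENNReal.rpow_ne_top_of_nonneg (by positivity) (hintfin φ))
    have h8 := ENNReal.toReal_mono (h6 ▸ h7) h5
    rw [h6, ENNReal.toReal_mul, ENNReal.toReal_ofReal hS0] at h8
    exact h8
  · -- S ≤ ‖T^n‖
    refine Real.iSup_le (fun B => ?_) (norm_nonneg _)
    obtain ⟨A, hA, hA0, hAt⟩ := B
    set φ : Lp ℝ (ENNReal.ofReal p) μ := indicatorConstLp (ENNReal.ofReal p) hA hAt (1:ℝ)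
      with hφdef
    obtain ⟨g, hg, hgae, hkey⟩ := key φ
    have hgν : ∫⁻ y, g y ∂ν = ν A := by
      have h1 : g =ᵐ[ν] fun y => ENNReal.ofReal (|φ y| ^ p) := hν_ac.ae_eq hgae
      have h2 : (φ : X → ℝ) =ᵐ[ν] Set.indicator A fun _ => (1:ℝ) :=
        hν_ac.ae_eq indicatorConstLp_coeFn
      calc ∫⁻ y, g y ∂ν = ∫⁻ y, ENNReal.ofReal (|φ y| ^ p) ∂ν := lintegral_congr_ae h1
        _ = ∫⁻ y, Set.indicator A (fun _ => (1:ℝ≥0∞)) y ∂ν := by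
            refine lintegral_congr_ae ?_
            filter_upwards [h2] with y hy
            rw [hy]
            by_cases hyA : y ∈ A <;>
              simp [Set.indicator, hyA, Real.zero_rpow hp0.ne', Real.one_rpow]
        _ = ν A := by rw [lintegral_indicator hA, setLIntegral_one]
    have hTφ : ‖(T ^ n) φ‖ = ((ν A) ^ (1 / p)).toReal := by rw [hnorm, hkey, hgν]
    have hφn : ‖φ‖ = (μ A).toReal ^ (1 / p) := by
      rw [hφdef, norm_indicatorConstLp hq0 hqt, hqr, norm_one, one_mul]; rfl
    have hle := ContinuousLinearMap.le_opNorm (T ^ n) φ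
    rw [hTφ, hφn] at hle
    have hμpos : 0 < (μ A).toReal := ENNReal.toReal_pos hA0.ne' hAt
    have hμp : 0 < (μ A).toReal ^ (1 / p) := Real.rpow_pos_of_pos hμpos _
    rw [ENNReal.toReal_div, Real.div_rpow ENNReal.toReal_nonneg ENNReal.toReal_nonneg,
      div_le_iff₀ hμp]
    exact le_trans (le_of_eq (ENNReal.toReal_rpow _ _)) hle
end

section
/- Let C_{w,f} be a weighted composition operator on C_0(Ω), where Ω is a locally compact Hausdorff space, w : Ω → 𝕂 is continuous and bounded, f : Ω → Ω is continuous, and for all ε > 0 and compact K ⊂ Ω the set {x : f(x) ∈ K and |w(x)| ≥ ε} is compact. Then for every n ∈ ℕ, ‖(C_{w,f})^n‖ = ‖w^{(n)}‖_∞, where w^{(n)} = (w∘f^{n-1})⋯(w∘f)·w and ‖·‖_∞ denotes the supremum norm over Ω. -/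
open scoped ZeroAtInfty

/-- For a weighted composition operator `C_{w,f}` on `C₀(Ω)`, with `w` continuous and bounded,
`f` continuous, and `{x : f x ∈ K ∧ |w x| ≥ ε}` compact for all `ε > 0` and compact `K`,
one has `‖(C_{w,f})^n‖ = ‖w^{(n)}‖_∞` for every `n ≥ 1`, where
`w^{(n)} = (w∘f^{n-1})⋯(w∘f)·w`. -/
theorem stmt5 {Ω : Type*} [TopologicalSpace Ω] [LocallyCompactSpace Ω] [T2Space Ω]
    (w : Ω → ℝ) (hw : Continuous w) (hwb : ∃ C : ℝ, ∀ x, |w x| ≤ C)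
    (f : Ω → Ω) (hf : Continuous f)
    (hcpt : ∀ ε : ℝ, 0 < ε → ∀ K : Set Ω, IsCompact K →
      IsCompact {x : Ω | f x ∈ K ∧ ε ≤ |w x|})
    (T : C₀(Ω, ℝ) →L[ℝ] C₀(Ω, ℝ))
    (hT : ∀ (φ : C₀(Ω, ℝ)) (x : Ω), T φ x = φ (f x) * w x)
    (n : ℕ) (hn : 1 ≤ n) :
    ‖T ^ n‖ = ⨆ x : Ω, |∏ j ∈ Finset.range n, w (f^[j] x)| := by
  obtain ⟨C, hC⟩ := hwb
  set W : Ω → ℝ := fun x => ∏ j ∈ Finset.range n, w (f^[j] x) with hWdef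
  -- formula for iterates
  have key : ∀ (m : ℕ) (φ : C₀(Ω, ℝ)) (x : Ω),
      (T ^ m) φ x = φ (f^[m] x) * ∏ j ∈ Finset.range m, w (f^[j] x) := by
    intro m
    induction m with
    | zero => intro φ x; simp
    | succ m ih =>
      intro φ x
      rw [pow_succ, ContinuousLinearMap.mul_apply, ih (T φ) x, hT,
        Finset.prod_range_succ, ← Function.iterate_succ_apply' f m x]
      ring
  -- bound on |W|
  have hDnn : (0 : ℝ) ≤ max C 0 := le_max_right _ _
  have hWle : ∀ x, |W x| ≤ (max C 0) ^ n := by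
    intro x
    rw [hWdef]
    calc |∏ j ∈ Finset.range n, w (f^[j] x)|
        = ∏ j ∈ Finset.range n, |w (f^[j] x)| := Finset.abs_prod _ _
      _ ≤ ∏ j ∈ Finset.range n, (max C 0) := by
          refine Finset.prod_le_prod (fun j _ => abs_nonneg _) (fun j _ => ?_)
          exact le_trans (hC _) (le_max_left _ _)
      _ = (max C 0) ^ n := by simp
  have hbdd : BddAbove (Set.range fun x => |W x|) := by
    refine ⟨(max C 0) ^ n, ?_⟩
    rintro _ ⟨x, rfl⟩
    exact hWle x
  rcases isEmpty_or_nonempty Ω with hΩ | hΩ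
  · -- empty case: both sides are 0
    have h0 : ∀ φ : C₀(Ω, ℝ), (T ^ n) φ = 0 := by
      intro φ; ext x; exact isEmptyElim x
    have : ‖T ^ n‖ ≤ 0 := by
      refine ContinuousLinearMap.opNorm_le_bound _ le_rfl fun φ => ?_
      rw [h0 φ]; simp
    rw [Real.iSup_of_isEmpty]
    exact le_antisymm this (norm_nonneg (T ^ n))
  · -- nonempty case
    have hMnn : 0 ≤ ⨆ x : Ω, |W x| := by
      obtain ⟨x₀⟩ := hΩ
      exact le_trans (abs_nonneg _) (le_ciSup hbdd x₀)
    refine le_antisymm ?_ ?_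
    · refine ContinuousLinearMap.opNorm_le_bound _ hMnn fun φ => ?_
      rw [← ZeroAtInftyContinuousMap.norm_toBCF_eq_norm]
      refine BoundedContinuousFunction.norm_le (by positivity) |>.mpr fun x => ?_
      have hφbound : |φ (f^[n] x)| ≤ ‖φ‖ := by
        calc |φ (f^[n] x)| = ‖φ.toBCF (f^[n] x)‖ := rfl
          _ ≤ ‖φ.toBCF‖ := BoundedContinuousFunction.norm_coe_le_norm _ _
          _ = ‖φ‖ := ZeroAtInftyContinuousMap.norm_toBCF_eq_norm
      have : ((T ^ n) φ).toBCF x = (T ^ n) φ x := rfl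
      rw [this, key n φ x, Real.norm_eq_abs, abs_mul]
      calc |φ (f^[n] x)| * |∏ j ∈ Finset.range n, w (f^[j] x)|
          ≤ ‖φ‖ * ⨆ x : Ω, |W x| :=
            mul_le_mul hφbound (le_ciSup hbdd x) (abs_nonneg _) (norm_nonneg _)
        _ = (⨆ x : Ω, |W x|) * ‖φ‖ := mul_comm _ _
    · refine ciSup_le fun x => ?_
      -- bump function at f^[n] x
      obtain ⟨g, hg1, hg0, hgc, hg01⟩ :=
        exists_continuous_one_zero_of_isCompact (isCompact_singleton (x := f^[n] x))
          isClosed_empty (Set.disjoint_empty _)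
      set φ : C₀(Ω, ℝ) := ⟨g, hgc.is_zero_at_infty⟩ with hφdef
      have hφnorm : ‖φ‖ ≤ 1 := by
        rw [← ZeroAtInftyContinuousMap.norm_toBCF_eq_norm]
        refine BoundedContinuousFunction.norm_le zero_le_one |>.mpr fun y => ?_
        have := hg01 y
        rw [Real.norm_eq_abs, abs_le]
        exact ⟨le_trans (by norm_num) this.1, this.2⟩
      have hφval : φ (f^[n] x) = 1 := hg1 rfl
      have : |W x| = |(T ^ n) φ x| := by
        rw [key n φ x, hφval, one_mul]
      rw [this]
      calc |(T ^ n) φ x| = ‖((T ^ n) φ).toBCF x‖ := rfl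
        _ ≤ ‖((T ^ n) φ).toBCF‖ := BoundedContinuousFunction.norm_coe_le_norm _ _
        _ = ‖(T ^ n) φ‖ := ZeroAtInftyContinuousMap.norm_toBCF_eq_norm
        _ ≤ ‖T ^ n‖ * ‖φ‖ := ContinuousLinearMap.le_opNorm _ _
        _ ≤ ‖T ^ n‖ * 1 := by
            exact mul_le_mul_of_nonneg_left hφnorm (norm_nonneg (T ^ n))
        _ = ‖T ^ n‖ := mul_one _
end

section
/- For a unilateral weighted backward shift B_w on ℓ^p(ℕ) (1 ≤ p < ∞), N_p(B_w) = sup_{i ∈ ℕ, N ∈ ℕ} (1/N) Σ_{n=1}^{min{N, i-1}} |w_{i-n} ⋯ w_{i-1}|^p; in particular, B_w is p-absolutely Cesàro bounded if and only if this supremum is finite. -/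
open scoped ENNReal


lemma stmt9_pow_apply (p : ℝ) [Fact (1 ≤ ENNReal.ofReal p)] (w : ℕ → ℝ)
    (B : lp (fun _ : ℕ => ℝ) (ENNReal.ofReal p) →L[ℝ] lp (fun _ : ℕ => ℝ) (ENNReal.ofReal p))
    (hB : ∀ (x : lp (fun _ : ℕ => ℝ) (ENNReal.ofReal p)) (n : ℕ),
      (B x : ∀ _ : ℕ, ℝ) n = w n * x (n + 1)) :
    ∀ (n : ℕ) (x : lp (fun _ : ℕ => ℝ) (ENNReal.ofReal p)) (i : ℕ),
      ((B ^ n) x : ∀ _ : ℕ, ℝ) i = (∏ j ∈ Finset.range n, w (i + j)) * x (i + n) := by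
  intro n
  induction n with
  | zero => intro x i; simp
  | succ n ih =>
    intro x i
    rw [pow_succ, ContinuousLinearMap.mul_apply, ih (B x) i, hB x (i + n),
      Finset.prod_range_succ, ← add_assoc]
    ring

lemma stmt9_prod_shift (w : ℕ → ℝ) (n k : ℕ) :
    ∏ j ∈ Finset.range n, w (k + j) = ∏ j ∈ Finset.Icc 1 n, w (k + n - j) := by
  refine Finset.prod_bij' (fun j _ => n - j) (fun j _ => n - j) ?_ ?_ ?_ ?_ ?_
  · intro a ha; simp only [Finset.mem_range] at ha; simp only [Finset.mem_Icc]; omega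
  · intro a ha; simp only [Finset.mem_Icc] at ha; simp only [Finset.mem_range]; omega
  · intro a ha; simp only [Finset.mem_range] at ha; omega
  · intro a ha; simp only [Finset.mem_Icc] at ha; omega
  · intro a ha; simp only [Finset.mem_range] at ha; congr 1; omega

lemma stmt9_filter_Icc (N i : ℕ) :
    (Finset.Icc 1 N).filter (fun n => n ≤ i) = Finset.Icc 1 (min N i) := by
  ext n
  simp only [Finset.mem_filter, Finset.mem_Icc]
  omega

lemma stmt9_single_norm (p : ℝ) (hp : 1 ≤ p) [Fact (1 ≤ ENNReal.ofReal p)] (w : ℕ → ℝ)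
    (B : lp (fun _ : ℕ => ℝ) (ENNReal.ofReal p) →L[ℝ] lp (fun _ : ℕ => ℝ) (ENNReal.ofReal p))
    (hB : ∀ (x : lp (fun _ : ℕ => ℝ) (ENNReal.ofReal p)) (n : ℕ),
      (B x : ∀ _ : ℕ, ℝ) n = w n * x (n + 1)) (i n : ℕ) (hn : 1 ≤ n) :
    ‖(B ^ n) (lp.single (ENNReal.ofReal p) i (1 : ℝ))‖ ^ p =
      if n ≤ i then |∏ j ∈ Finset.Icc 1 n, w (i - j)| ^ p else 0 := by
  have hp0 : (0 : ℝ) < p := lt_of_lt_of_le one_pos hp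
  have hq : (ENNReal.ofReal p).toReal = p := ENNReal.toReal_ofReal hp0.le
  have hqpos : 0 < (ENNReal.ofReal p).toReal := by rw [hq]; exact hp0
  by_cases hni : n ≤ i
  · rw [if_pos hni]
    have hx : (B ^ n) (lp.single (ENNReal.ofReal p) i (1 : ℝ)) =
        lp.single (ENNReal.ofReal p) (i - n) (∏ j ∈ Finset.Icc 1 n, w (i - j)) := by
      apply Subtype.ext
      funext k
      rw [stmt9_pow_apply p w B hB n _ k]
      by_cases hk : k = i - n
      · subst hk
        rw [lp.single_apply_self, show i - n + n = i by omega, lp.single_apply_self, mul_one,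
          stmt9_prod_shift w n (i - n)]
        apply Finset.prod_congr rfl
        intro j hj
        rw [Finset.mem_Icc] at hj
        congr 1
        omega
      · rw [lp.single_apply_ne _ _ _ hk, lp.single_apply_ne, mul_zero]
        omega
    rw [hx]
    have := lp.norm_single (E := fun _ : ℕ => ℝ) (ENNReal.ofReal_pos.mpr hp0) (i - n) (∏ j ∈ Finset.Icc 1 n, w (i - j) : ℝ)
    rw [this, Real.norm_eq_abs]
  · rw [if_neg hni]
    have hx : (B ^ n) (lp.single (ENNReal.ofReal p) i (1 : ℝ)) = 0 := by
      apply Subtype.ext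
      funext k
      rw [stmt9_pow_apply p w B hB n _ k, lp.single_apply_ne, mul_zero]
      · rfl
      · omega
    rw [hx, norm_zero, Real.zero_rpow hp0.ne']

lemma stmt9_key_bound (p : ℝ) (hp : 1 ≤ p) [Fact (1 ≤ ENNReal.ofReal p)] (w : ℕ → ℝ)
    (C : ℝ) (hw : ∀ i, |w i| ≤ C)
    (B : lp (fun _ : ℕ => ℝ) (ENNReal.ofReal p) →L[ℝ] lp (fun _ : ℕ => ℝ) (ENNReal.ofReal p))
    (hB : ∀ (x : lp (fun _ : ℕ => ℝ) (ENNReal.ofReal p)) (n : ℕ),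
      (B x : ∀ _ : ℕ, ℝ) n = w n * x (n + 1))
    (x : lp (fun _ : ℕ => ℝ) (ENNReal.ofReal p)) (N : ℕ) (hN : 1 ≤ N) (M : ℝ)
    (hM : ∀ i : ℕ, (1 / N : ℝ) * ∑ n ∈ Finset.Icc 1 (min N i),
        |∏ j ∈ Finset.Icc 1 n, w (i - j)| ^ p ≤ M) :
    (1 / N : ℝ) * ∑ n ∈ Finset.Icc 1 N, ‖(B ^ n) x‖ ^ p ≤ M * ‖x‖ ^ p := by
  have hp0 : (0 : ℝ) < p := lt_of_lt_of_le one_pos hp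
  have hq : (ENNReal.ofReal p).toReal = p := ENNReal.toReal_ofReal hp0.le
  have hqpos : 0 < (ENNReal.ofReal p).toReal := by rw [hq]; exact hp0
  have hC0 : 0 ≤ C := le_trans (abs_nonneg _) (hw 0)
  set F : ℕ → ℕ → ℝ := fun n i =>
    if n ≤ i then |∏ j ∈ Finset.Icc 1 n, w (i - j)| ^ p * |x i| ^ p else 0 with hF
  have hxsum : Summable (fun i => |x i| ^ p) := by
    have := (lp.memℓp x).summable hqpos
    simpa [hq, Real.norm_eq_abs] using this
  have hFnonneg : ∀ n i, 0 ≤ F n i := by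
    intro n i
    rw [hF]
    dsimp only
    split
    · exact mul_nonneg (Real.rpow_nonneg (abs_nonneg _) _) (Real.rpow_nonneg (abs_nonneg _) _)
    · exact le_refl 0
  have hFle : ∀ n i, F n i ≤ (C ^ n) ^ p * |x i| ^ p := by
    intro n i
    rw [hF]
    dsimp only
    split
    · refine mul_le_mul_of_nonneg_right ?_ (Real.rpow_nonneg (abs_nonneg _) _)
      refine Real.rpow_le_rpow (abs_nonneg _) ?_ hp0.le
      calc |∏ j ∈ Finset.Icc 1 n, w (i - j)| ≤ ∏ j ∈ Finset.Icc 1 n, |w (i - j)| := by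
              rw [Finset.abs_prod]
        _ ≤ ∏ j ∈ Finset.Icc 1 n, C :=
              Finset.prod_le_prod (fun _ _ => abs_nonneg _) (fun j _ => hw _)
        _ = C ^ n := by rw [Finset.prod_const, Nat.card_Icc]; norm_num
    · exact mul_nonneg (Real.rpow_nonneg (pow_nonneg hC0 _) _) (Real.rpow_nonneg (abs_nonneg _) _)
  have hFsum : ∀ n, Summable (F n) := fun n =>
    Summable.of_nonneg_of_le (hFnonneg n) (hFle n) (hxsum.mul_left _)
  -- step 1 : for 1 ≤ n, ‖(B^n) x‖^p = ∑' i, F n i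
  have step1 : ∀ n : ℕ, 1 ≤ n → ‖(B ^ n) x‖ ^ p = ∑' i, F n i := by
    intro n hn
    have h1 : ‖(B ^ n) x‖ ^ p = ∑' k, |((B ^ n) x : ∀ _ : ℕ, ℝ) k| ^ p := by
      have := lp.norm_rpow_eq_tsum hqpos ((B ^ n) x)
      simpa [hq, Real.norm_eq_abs] using this
    have h2 : ∀ k : ℕ, |((B ^ n) x : ∀ _ : ℕ, ℝ) k| ^ p = F n (k + n) := by
      intro k
      rw [stmt9_pow_apply p w B hB n x k, hF]
      dsimp only
      rw [if_pos (by omega : n ≤ k + n), abs_mul,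
        Real.mul_rpow (abs_nonneg _) (abs_nonneg _), stmt9_prod_shift w n k]
    rw [h1, tsum_congr h2]
    refine Function.Injective.tsum_eq (g := fun k => k + n) (add_left_injective n) ?_
    intro i hi
    rw [Function.mem_support] at hi
    have hni : n ≤ i := by
      by_contra hcon
      exact hi (by rw [hF]; dsimp only; rw [if_neg hcon])
    exact ⟨i - n, by show i - n + n = i; omega⟩
  -- step 2 : swap sums
  have step2 : ∑ n ∈ Finset.Icc 1 N, ‖(B ^ n) x‖ ^ p =
      ∑' i, ∑ n ∈ Finset.Icc 1 N, F n i := by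
    rw [Finset.sum_congr rfl (fun n hn => step1 n (Finset.mem_Icc.mp hn).1)]
    exact (Summable.tsum_finsetSum (fun n _ => hFsum n)).symm
  -- step 3 : inner sum
  have step3 : ∀ i : ℕ, ∑ n ∈ Finset.Icc 1 N, F n i =
      (∑ n ∈ Finset.Icc 1 (min N i), |∏ j ∈ Finset.Icc 1 n, w (i - j)| ^ p) * |x i| ^ p := by
    intro i
    rw [hF]
    dsimp only
    rw [← Finset.sum_filter, stmt9_filter_Icc, Finset.sum_mul]
  have hxnorm : ‖x‖ ^ p = ∑' i, |x i| ^ p := by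
    have := lp.norm_rpow_eq_tsum hqpos x
    simpa [hq, Real.norm_eq_abs] using this
  have hgsum : Summable (fun i => ∑ n ∈ Finset.Icc 1 N, F n i) :=
    summable_sum (fun n _ => hFsum n)
  rw [step2, hxnorm, ← tsum_mul_left, ← tsum_mul_left]
  refine Summable.tsum_le_tsum ?_ (hgsum.mul_left _) (hxsum.mul_left _)
  intro i
  rw [step3 i, ← mul_assoc]
  exact mul_le_mul_of_nonneg_right (hM i) (Real.rpow_nonneg (abs_nonneg _) _)

/-- For a unilateral weighted backward shift `B_w` on `ℓ^p(ℕ)` (here `0`-indexed, so that the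
entry of index `i` corresponds to the paper's entry `i+1`),
`N_p(B_w) = sup_{i, N} (1/N) Σ_{n=1}^{min{N,i}} |w_{i-n} ⋯ w_{i-1}|^p`; in particular `B_w` is
`p`-absolutely Cesàro bounded iff this supremum is finite. -/
theorem stmt9 (p : ℝ) (hp : 1 ≤ p) [Fact (1 ≤ ENNReal.ofReal p)] (w : ℕ → ℝ)
    (hw : ∃ C : ℝ, ∀ i, |w i| ≤ C)
    (B : lp (fun _ : ℕ => ℝ) (ENNReal.ofReal p) →L[ℝ] lp (fun _ : ℕ => ℝ) (ENNReal.ofReal p))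
    (hB : ∀ (x : lp (fun _ : ℕ => ℝ) (ENNReal.ofReal p)) (n : ℕ),
      (B x : ∀ _ : ℕ, ℝ) n = w n * x (n + 1)) :
    (⨆ x : {x : lp (fun _ : ℕ => ℝ) (ENNReal.ofReal p) // ‖x‖ = 1}, ⨆ N : ℕ, ⨆ _ : 1 ≤ N,
        ENNReal.ofReal ((1 / N : ℝ) * ∑ n ∈ Finset.Icc 1 N, ‖(B ^ n) x.1‖ ^ p))
      = (⨆ i : ℕ, ⨆ N : ℕ, ⨆ _ : 1 ≤ N,
          ENNReal.ofReal ((1 / N : ℝ) * ∑ n ∈ Finset.Icc 1 (min N i),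
            |∏ j ∈ Finset.Icc 1 n, w (i - j)| ^ p)) ∧
    ((∃ C : ℝ, 0 < C ∧ ∀ x : lp (fun _ : ℕ => ℝ) (ENNReal.ofReal p), ∀ N : ℕ, 1 ≤ N →
        (1 / N : ℝ) * ∑ n ∈ Finset.Icc 1 N, ‖(B ^ n) x‖ ^ p ≤ C * ‖x‖ ^ p) ↔
      (⨆ i : ℕ, ⨆ N : ℕ, ⨆ _ : 1 ≤ N,
          ENNReal.ofReal ((1 / N : ℝ) * ∑ n ∈ Finset.Icc 1 (min N i),
            |∏ j ∈ Finset.Icc 1 n, w (i - j)| ^ p)) ≠ ⊤) := by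
  
  obtain ⟨C, hw⟩ := hw
  have hp0 : (0 : ℝ) < p := lt_of_lt_of_le one_pos hp
  have hq : (ENNReal.ofReal p).toReal = p := ENNReal.toReal_ofReal hp0.le
  have hqpos : 0 < (ENNReal.ofReal p).toReal := by rw [hq]; exact hp0
  set S := (⨆ i : ℕ, ⨆ N : ℕ, ⨆ _ : 1 ≤ N,
      ENNReal.ofReal ((1 / N : ℝ) * ∑ n ∈ Finset.Icc 1 (min N i),
        |∏ j ∈ Finset.Icc 1 n, w (i - j)| ^ p)) with hSdef
  have hterm_nonneg : ∀ i N : ℕ, 0 ≤ (1 / N : ℝ) * ∑ n ∈ Finset.Icc 1 (min N i),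
      |∏ j ∈ Finset.Icc 1 n, w (i - j)| ^ p := fun i N =>
    mul_nonneg (by positivity) (Finset.sum_nonneg fun n _ => Real.rpow_nonneg (abs_nonneg _) _)
  have hMbound : S ≠ ⊤ → ∀ (N : ℕ), 1 ≤ N → ∀ i : ℕ,
      (1 / N : ℝ) * ∑ n ∈ Finset.Icc 1 (min N i),
        |∏ j ∈ Finset.Icc 1 n, w (i - j)| ^ p ≤ S.toReal := by
    intro hS' N hN i
    have h1 : ENNReal.ofReal ((1 / N : ℝ) * ∑ n ∈ Finset.Icc 1 (min N i),
        |∏ j ∈ Finset.Icc 1 n, w (i - j)| ^ p) ≤ S :=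
      le_iSup_of_le i (le_iSup_of_le N (le_iSup_of_le hN le_rfl))
    have h2 := ENNReal.toReal_mono hS' h1
    rwa [ENNReal.toReal_ofReal (hterm_nonneg i N)] at h2
  have hsingle_norm : ∀ i : ℕ,
      ‖(lp.single (ENNReal.ofReal p) i (1 : ℝ) : lp (fun _ : ℕ => ℝ) (ENNReal.ofReal p))‖ = 1 := by
    intro i
    have h : ‖(lp.single (ENNReal.ofReal p) i ((fun _ : ℕ => (1 : ℝ)) i) :
          lp (fun _ : ℕ => ℝ) (ENNReal.ofReal p))‖ =
        ‖(fun _ : ℕ => (1 : ℝ)) i‖ := lp.norm_single (E := fun _ : ℕ => ℝ) (ENNReal.ofReal_pos.mpr hp0) i ((fun _ : ℕ => (1 : ℝ)) i)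
    simpa using h
  have hsingle_sum : ∀ i N : ℕ,
      ∑ n ∈ Finset.Icc 1 N, ‖(B ^ n) (lp.single (ENNReal.ofReal p) i (1 : ℝ))‖ ^ p =
      ∑ n ∈ Finset.Icc 1 (min N i), |∏ j ∈ Finset.Icc 1 n, w (i - j)| ^ p := by
    intro i N
    rw [Finset.sum_congr rfl
        (fun n hn => stmt9_single_norm p hp w B hB i n (Finset.mem_Icc.mp hn).1),
      ← Finset.sum_filter, stmt9_filter_Icc]
  constructor
  · apply le_antisymm
    · refine iSup_le fun x => iSup_le fun N => iSup_le fun hN => ?_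
      by_cases hS' : S = ⊤
      · rw [hS']; exact le_top
      · have key := stmt9_key_bound p hp w C hw B hB x.1 N hN S.toReal (hMbound hS' N hN)
        rw [x.2, Real.one_rpow, mul_one] at key
        exact le_trans (ENNReal.ofReal_le_ofReal key) (le_of_eq (ENNReal.ofReal_toReal hS'))
    · refine iSup_le fun i => iSup_le fun N => iSup_le fun hN => ?_
      refine le_iSup_of_le ⟨lp.single (ENNReal.ofReal p) i (1 : ℝ), hsingle_norm i⟩
        (le_iSup_of_le N (le_iSup_of_le hN ?_))
      rw [hsingle_sum i N]
  · constructor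
    · rintro ⟨C', hC'0, hC'⟩
      have hle : S ≤ ENNReal.ofReal C' := by
        refine iSup_le fun i => iSup_le fun N => iSup_le fun hN => ?_
        apply ENNReal.ofReal_le_ofReal
        have h3 := hC' (lp.single (ENNReal.ofReal p) i (1 : ℝ)) N hN
        rwa [hsingle_norm i, Real.one_rpow, mul_one, hsingle_sum i N] at h3
      exact ne_top_of_le_ne_top ENNReal.ofReal_ne_top hle
    · intro hS'
      refine ⟨S.toReal + 1, by positivity, fun x N hN => ?_⟩
      have key := stmt9_key_bound p hp w C hw B hB x N hN S.toReal (hMbound hS' N hN)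
      refine le_trans key (mul_le_mul_of_nonneg_right (by linarith [ENNReal.toReal_nonneg (a := S)])
        (Real.rpow_nonneg (norm_nonneg _) _))
end

section
/- For a bilateral weighted backward shift B_w on ℓ^p(ℤ) (1 ≤ p < ∞), N_p(B_w) = sup_{i ∈ ℤ, N ∈ ℕ} (1/N) Σ_{n=1}^{N} |w_{i-n} ⋯ w_{i-1}|^p; in particular, B_w is p-absolutely Cesàro bounded if and only if this supremum is finite. -/
open scoped ENNReal

/-- For a bilateral weighted backward shift `B_w` on `ℓ^p(ℤ)`,
`N_p(B_w) = sup_{i ∈ ℤ, N ∈ ℕ} (1/N) Σ_{n=1}^{N} |w_{i-n} ⋯ w_{i-1}|^p`; in particular `B_w`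
is `p`-absolutely Cesàro bounded iff this supremum is finite. -/
theorem stmt10 (p : ℝ) (hp : 1 ≤ p) [Fact (1 ≤ ENNReal.ofReal p)] (w : ℤ → ℝ)
    (hw : ∃ C : ℝ, ∀ i, |w i| ≤ C)
    (B : lp (fun _ : ℤ => ℝ) (ENNReal.ofReal p) →L[ℝ] lp (fun _ : ℤ => ℝ) (ENNReal.ofReal p))
    (hB : ∀ (x : lp (fun _ : ℤ => ℝ) (ENNReal.ofReal p)) (n : ℤ),
      (B x : ∀ _ : ℤ, ℝ) n = w n * x (n + 1)) :
    (⨆ x : {x : lp (fun _ : ℤ => ℝ) (ENNReal.ofReal p) // ‖x‖ = 1}, ⨆ N : ℕ, ⨆ _ : 1 ≤ N,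
        ENNReal.ofReal ((1 / N : ℝ) * ∑ n ∈ Finset.Icc 1 N, ‖(B ^ n) x.1‖ ^ p))
      = (⨆ i : ℤ, ⨆ N : ℕ, ⨆ _ : 1 ≤ N,
          ENNReal.ofReal ((1 / N : ℝ) * ∑ n ∈ Finset.Icc 1 N,
            |∏ j ∈ Finset.Icc 1 n, w (i - j)| ^ p)) ∧
    ((∃ C : ℝ, 0 < C ∧ ∀ x : lp (fun _ : ℤ => ℝ) (ENNReal.ofReal p), ∀ N : ℕ, 1 ≤ N →
        (1 / N : ℝ) * ∑ n ∈ Finset.Icc 1 N, ‖(B ^ n) x‖ ^ p ≤ C * ‖x‖ ^ p) ↔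
      (⨆ i : ℤ, ⨆ N : ℕ, ⨆ _ : 1 ≤ N,
          ENNReal.ofReal ((1 / N : ℝ) * ∑ n ∈ Finset.Icc 1 N,
            |∏ j ∈ Finset.Icc 1 n, w (i - j)| ^ p)) ≠ ⊤) := by
  classical
  have hp0 : (0:ℝ) < p := lt_of_lt_of_le one_pos hp
  set q : ℝ≥0∞ := ENNReal.ofReal p with hqdef
  have hq : q.toReal = p := ENNReal.toReal_ofReal hp0.le
  have hq0 : 0 < q.toReal := by rw [hq]; exact hp0
  -- pointwise formula for powers of B
  have hBn : ∀ (n : ℕ) (x : lp (fun _ : ℤ => ℝ) q) (i : ℤ),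
      ((B ^ n) x : ∀ _ : ℤ, ℝ) i = (∏ j ∈ Finset.range n, w (i + j)) * x (i + n) := by
    intro n
    induction n with
    | zero => intro x i; simp
    | succ n ih =>
      intro x i
      have h1 : ((B ^ (n+1)) x : ∀ _ : ℤ, ℝ) i = ((B ^ n) (B x) : ∀ _ : ℤ, ℝ) i := by
        rw [pow_succ]; rfl
      rw [h1, ih (B x) i, hB x (i + (n:ℤ)), Finset.prod_range_succ]
      have h2 : i + ((n:ℤ) + 1) = i + ((n+1 : ℕ) : ℤ) := by push_cast; ring
      rw [mul_assoc, ← h2, add_assoc]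
  -- product reindexing
  have hprod : ∀ (n : ℕ) (k : ℤ),
      (∏ j ∈ Finset.range n, w (k - (n:ℤ) + (j:ℤ))) = ∏ j ∈ Finset.Icc 1 n, w (k - (j:ℤ)) := by
    intro n
    induction n with
    | zero => intro k; simp
    | succ n ih =>
      intro k
      rw [Finset.prod_range_succ', Finset.prod_Icc_succ_top (Nat.one_le_iff_ne_zero.mpr (Nat.succ_ne_zero n))]
      have h1 : (∏ j ∈ Finset.range n, w (k - ((n+1:ℕ):ℤ) + ((j+1:ℕ):ℤ)))
          = ∏ j ∈ Finset.range n, w (k - (n:ℤ) + (j:ℤ)) :=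
        Finset.prod_congr rfl fun j _ => by congr 1; push_cast; ring
      rw [h1, ih k]
      congr 2
      push_cast; ring
  -- norm and summability facts
  have hsum_norm : ∀ f : lp (fun _ : ℤ => ℝ) q, Summable (fun k : ℤ => |f k| ^ p) := by
    intro f
    have := (lp.memℓp f).summable hq0
    simpa [hq, Real.norm_eq_abs] using this
  have hnorm : ∀ f : lp (fun _ : ℤ => ℝ) q, ‖f‖ ^ p = ∑' k : ℤ, |f k| ^ p := by
    intro f
    have := lp.norm_rpow_eq_tsum hq0 f
    simpa [hq, Real.norm_eq_abs] using this
  have hterm : ∀ (n : ℕ) (x : lp (fun _ : ℤ => ℝ) q) (k : ℤ),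
      |((B ^ n) x : ∀ _ : ℤ, ℝ) (k - (n:ℤ))| ^ p
        = |∏ j ∈ Finset.Icc 1 n, w (k - j)| ^ p * |x k| ^ p := by
    intro n x k
    rw [hBn n x (k - n), show (k - (n:ℤ)) + (n:ℤ) = k by ring, abs_mul,
      Real.mul_rpow (abs_nonneg _) (abs_nonneg _), hprod n k]
  have hBnorm : ∀ (n : ℕ) (x : lp (fun _ : ℤ => ℝ) q),
      ‖(B ^ n) x‖ ^ p = ∑' k : ℤ, |∏ j ∈ Finset.Icc 1 n, w (k - j)| ^ p * |x k| ^ p := by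
    intro n x
    calc ‖(B ^ n) x‖ ^ p = ∑' i : ℤ, |((B ^ n) x : ∀ _ : ℤ, ℝ) i| ^ p := hnorm _
      _ = ∑' k : ℤ, |((B ^ n) x : ∀ _ : ℤ, ℝ) (k - (n:ℤ))| ^ p :=
          ((Equiv.subRight (n:ℤ)).tsum_eq (fun i : ℤ => |((B ^ n) x : ∀ _ : ℤ, ℝ) i| ^ p)).symm
      _ = ∑' k : ℤ, |∏ j ∈ Finset.Icc 1 n, w (k - j)| ^ p * |x k| ^ p :=
          tsum_congr fun k => hterm n x k
  have hsummand_summable : ∀ (n : ℕ) (x : lp (fun _ : ℤ => ℝ) q),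
      Summable (fun k : ℤ => |∏ j ∈ Finset.Icc 1 n, w (k - j)| ^ p * |x k| ^ p) := by
    intro n x
    have h1 : Summable (fun i : ℤ => |((B ^ n) x : ∀ _ : ℤ, ℝ) i| ^ p) := hsum_norm _
    have h2 := ((Equiv.subRight (n:ℤ)).summable_iff
      (f := fun i : ℤ => |((B ^ n) x : ∀ _ : ℤ, ℝ) i| ^ p)).2 h1
    exact h2.congr fun k => hterm n x k
  -- main identity: Cesàro average as a weighted tsum
  have hA : ∀ (N : ℕ) (x : lp (fun _ : ℤ => ℝ) q),
      (1 / N : ℝ) * ∑ n ∈ Finset.Icc 1 N, ‖(B ^ n) x‖ ^ p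
        = ∑' k : ℤ, |x k| ^ p *
            ((1 / N : ℝ) * ∑ n ∈ Finset.Icc 1 N, |∏ j ∈ Finset.Icc 1 n, w (k - j)| ^ p) := by
    intro N x
    have h1 : ∑ n ∈ Finset.Icc 1 N, ‖(B ^ n) x‖ ^ p
        = ∑' k : ℤ, ∑ n ∈ Finset.Icc 1 N, |∏ j ∈ Finset.Icc 1 n, w (k - j)| ^ p * |x k| ^ p := by
      rw [Summable.tsum_finsetSum (fun n _ => hsummand_summable n x)]
      exact Finset.sum_congr rfl fun n _ => hBnorm n x
    rw [h1, ← tsum_mul_left]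
    refine tsum_congr fun k => ?_
    rw [← Finset.sum_mul]
    ring
  have hA_summable : ∀ (N : ℕ) (x : lp (fun _ : ℤ => ℝ) q),
      Summable (fun k : ℤ => |x k| ^ p *
          ((1 / N : ℝ) * ∑ n ∈ Finset.Icc 1 N, |∏ j ∈ Finset.Icc 1 n, w (k - j)| ^ p)) := by
    intro N x
    have h1 : Summable (fun k : ℤ =>
        ∑ n ∈ Finset.Icc 1 N, |∏ j ∈ Finset.Icc 1 n, w (k - j)| ^ p * |x k| ^ p) :=
      summable_sum fun n _ => hsummand_summable n x
    refine (h1.mul_left (1 / N : ℝ)).congr fun k => ?_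
    rw [← Finset.sum_mul]; ring
  -- the standard basis vectors
  have hsingle_norm : ∀ i : ℤ, ‖lp.single (E := fun _ : ℤ => ℝ) q i (1:ℝ)‖ = 1 := by
    intro i
    have := lp.norm_single (E := fun _ : ℤ => ℝ) (p := q) (ENNReal.ofReal_pos.mpr hp0) i (1:ℝ)
    simpa using this
  have hc_eq : ∀ (i : ℤ) (N : ℕ),
      (1 / N : ℝ) * ∑ n ∈ Finset.Icc 1 N, ‖(B ^ n) (lp.single (E := fun _ : ℤ => ℝ) q i (1:ℝ))‖ ^ p
        = (1 / N : ℝ) * ∑ n ∈ Finset.Icc 1 N, |∏ j ∈ Finset.Icc 1 n, w (i - j)| ^ p := by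
    intro i N
    rw [hA N (lp.single (E := fun _ : ℤ => ℝ) q i 1)]
    rw [tsum_eq_single i (fun k hk => by
      rw [lp.single_apply_ne q i 1 hk]
      simp [Real.zero_rpow hp0.ne'])]
    rw [lp.single_apply_self]
    simp
  -- nonnegativity of the averages
  have hc_nonneg : ∀ (i : ℤ) (N : ℕ),
      0 ≤ (1 / N : ℝ) * ∑ n ∈ Finset.Icc 1 N, |∏ j ∈ Finset.Icc 1 n, w (i - j)| ^ p := by
    intro i N
    apply mul_nonneg (by positivity)
    exact Finset.sum_nonneg fun n _ => Real.rpow_nonneg (abs_nonneg _) p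
  -- abbreviation for RHS supremum
  set R : ℝ≥0∞ := ⨆ i : ℤ, ⨆ N : ℕ, ⨆ _ : 1 ≤ N,
      ENNReal.ofReal ((1 / N : ℝ) * ∑ n ∈ Finset.Icc 1 N,
        |∏ j ∈ Finset.Icc 1 n, w (i - j)| ^ p) with hRdef
  have hcR : ∀ (i : ℤ) (N : ℕ), 1 ≤ N →
      ENNReal.ofReal ((1 / N : ℝ) * ∑ n ∈ Finset.Icc 1 N,
        |∏ j ∈ Finset.Icc 1 n, w (i - j)| ^ p) ≤ R := by
    intro i N hN
    exact le_iSup_of_le i (le_iSup_of_le N (le_iSup_of_le hN le_rfl))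
  -- key upper bound
  have key_le : ∀ (x : lp (fun _ : ℤ => ℝ) q), ‖x‖ = 1 → ∀ (N : ℕ), 1 ≤ N →
      ENNReal.ofReal ((1 / N : ℝ) * ∑ n ∈ Finset.Icc 1 N, ‖(B ^ n) x‖ ^ p) ≤ R := by
    intro x hx N hN
    rw [hA N x]
    rw [ENNReal.ofReal_tsum_of_nonneg
      (fun k => mul_nonneg (Real.rpow_nonneg (abs_nonneg _) p) (hc_nonneg k N))
      (hA_summable N x)]
    have hbound : ∀ k : ℤ,
        ENNReal.ofReal (|x k| ^ p *
          ((1 / N : ℝ) * ∑ n ∈ Finset.Icc 1 N, |∏ j ∈ Finset.Icc 1 n, w (k - j)| ^ p))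
        ≤ ENNReal.ofReal (|x k| ^ p) * R := by
      intro k
      rw [ENNReal.ofReal_mul (Real.rpow_nonneg (abs_nonneg _) p)]
      exact mul_le_mul_right (hcR k N hN) _
    calc ∑' k : ℤ, ENNReal.ofReal (|x k| ^ p *
          ((1 / N : ℝ) * ∑ n ∈ Finset.Icc 1 N, |∏ j ∈ Finset.Icc 1 n, w (k - j)| ^ p))
        ≤ ∑' k : ℤ, ENNReal.ofReal (|x k| ^ p) * R := ENNReal.tsum_le_tsum hbound
      _ = (∑' k : ℤ, ENNReal.ofReal (|x k| ^ p)) * R := ENNReal.tsum_mul_right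
      _ = ENNReal.ofReal (∑' k : ℤ, |x k| ^ p) * R := by
          rw [ENNReal.ofReal_tsum_of_nonneg
            (fun k => Real.rpow_nonneg (abs_nonneg _) p) (hsum_norm x)]
      _ = R := by rw [← hnorm x, hx, Real.one_rpow, ENNReal.ofReal_one, one_mul]
  constructor
  · apply le_antisymm
    · refine iSup_le fun x => iSup_le fun N => iSup_le fun hN => key_le x.1 x.2 N hN
    · refine iSup_le fun i => iSup_le fun N => iSup_le fun hN => ?_
      refine le_iSup_of_le ⟨lp.single (E := fun _ : ℤ => ℝ) q i (1:ℝ), hsingle_norm i⟩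
        (le_iSup_of_le N (le_iSup_of_le hN ?_))
      exact le_of_eq (by rw [hc_eq i N])
  · constructor
    · rintro ⟨C, hC0, hC⟩
      have hRle : R ≤ ENNReal.ofReal C := by
        refine iSup_le fun i => iSup_le fun N => iSup_le fun hN => ?_
        apply ENNReal.ofReal_le_ofReal
        rw [← hc_eq i N]
        have := hC (lp.single (E := fun _ : ℤ => ℝ) q i (1:ℝ)) N hN
        rwa [hsingle_norm i, Real.one_rpow, mul_one] at this
      exact ne_top_of_le_ne_top ENNReal.ofReal_ne_top hRle
    · intro hR
      refine ⟨R.toReal + 1, by positivity, fun x N hN => ?_⟩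
      have hcS : ∀ k : ℤ,
          (1 / N : ℝ) * ∑ n ∈ Finset.Icc 1 N, |∏ j ∈ Finset.Icc 1 n, w (k - j)| ^ p
            ≤ R.toReal + 1 := by
        intro k
        have h1 := ENNReal.toReal_mono hR (hcR k N hN)
        rw [ENNReal.toReal_ofReal (hc_nonneg k N)] at h1
        linarith
      rw [hA N x, hnorm x]
      calc ∑' k : ℤ, |x k| ^ p *
            ((1 / N : ℝ) * ∑ n ∈ Finset.Icc 1 N, |∏ j ∈ Finset.Icc 1 n, w (k - j)| ^ p)
          ≤ ∑' k : ℤ, |x k| ^ p * (R.toReal + 1) := by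
            refine Summable.tsum_le_tsum (fun k => ?_) (hA_summable N x) ((hsum_norm x).mul_right _)
            exact mul_le_mul_of_nonneg_left (hcS k) (Real.rpow_nonneg (abs_nonneg _) p)
        _ = (R.toReal + 1) * ∑' k : ℤ, |x k| ^ p := by rw [tsum_mul_right, mul_comm]
end

section
/- Fix 1 ≤ p < q < ∞ and let B_w be the unilateral weighted backward shift on ℓ^p(ℕ) with weights w_n = ((n+1)/n)^{1/q}. Then B_w is p-absolutely Cesàro bounded but not q-absolutely Cesàro bounded; in particular, B_w is not power-bounded. -/
open scoped ENNReal

private lemma auxBern {s : ℝ} (hs0 : 0 < s) (hs1 : s ≤ 1) {j : ℝ} (hj : 1 ≤ j) :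
    s * j ^ (s - 1) ≤ j ^ s - (j - 1) ^ s := by
  have hj0 : (0:ℝ) < j := lt_of_lt_of_le one_pos hj
  have hj1 : 1 / j ≤ 1 := by rw [div_le_one hj0]; exact hj
  have h1 : (j - 1) ^ s = j ^ s * (1 - 1 / j) ^ s := by
    rw [← Real.mul_rpow hj0.le (by linarith)]
    congr 1
    field_simp
  have h2 : (1 - 1 / j) ^ s ≤ 1 - s * (1 / j) := by
    have hber := rpow_one_add_le_one_add_mul_self (s := -(1/j)) (p := s)
      (by linarith) hs0.le hs1
    have e1 : (1 : ℝ) + -(1/j) = 1 - 1/j := by ring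
    have e2 : (1 : ℝ) + s * -(1/j) = 1 - s * (1/j) := by ring
    rw [e1, e2] at hber
    exact hber
  have h3 : j ^ s * (s * (1/j)) ≤ j ^ s * (1 - (1 - 1/j) ^ s) :=
    mul_le_mul_of_nonneg_left (by linarith) (Real.rpow_nonneg hj0.le s)
  have h4 : j ^ (s - 1) = j ^ s / j := Real.rpow_sub_one hj0.ne' s
  calc s * j ^ (s - 1) = j ^ s * (s * (1/j)) := by rw [h4]; ring
    _ ≤ j ^ s * (1 - (1 - 1/j) ^ s) := h3
    _ = j ^ s - (j - 1) ^ s := by rw [h1]; ring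

private lemma auxSum {r : ℝ} (hr0 : 0 < r) (hr1 : r < 1) (m : ℕ) :
    ∑ j ∈ Finset.Icc 1 m, ((j : ℝ)) ^ (-r) ≤ (m : ℝ) ^ (1 - r) / (1 - r) := by
  have hs0 : (0:ℝ) < 1 - r := by linarith
  have step : ∀ j ∈ Finset.Icc 1 m, ((j:ℝ)) ^ (-r)
      ≤ ((j:ℝ) ^ (1-r) - ((j:ℝ) - 1) ^ (1-r)) / (1 - r) := by
    intro j hj
    rw [Finset.mem_Icc] at hj
    have h1 : (1:ℝ) ≤ (j:ℝ) := by exact_mod_cast hj.1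
    have hb := auxBern hs0 (by linarith) h1
    rw [le_div_iff₀ hs0]
    have he : (1 - r) - 1 = -r := by ring
    calc (j:ℝ) ^ (-r) * (1-r) = (1-r) * (j:ℝ) ^ ((1-r)-1) := by rw [he]; ring
      _ ≤ _ := hb
  calc ∑ j ∈ Finset.Icc 1 m, ((j:ℝ)) ^ (-r)
      ≤ ∑ j ∈ Finset.Icc 1 m, ((j:ℝ) ^ (1-r) - ((j:ℝ) - 1) ^ (1-r)) / (1 - r) :=
        Finset.sum_le_sum step
    _ = (∑ j ∈ Finset.Icc 1 m, ((j:ℝ) ^ (1-r) - ((j:ℝ) - 1) ^ (1-r))) / (1-r) :=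
        (Finset.sum_div _ _ _).symm
    _ = (m : ℝ) ^ (1 - r) / (1 - r) := by
        congr 1
        have htel := Finset.sum_range_sub (fun i : ℕ => ((i:ℝ)) ^ (1-r)) m
        have hconv : ∑ j ∈ Finset.Icc 1 m, ((j:ℝ) ^ (1-r) - ((j:ℝ) - 1) ^ (1-r))
            = ∑ i ∈ Finset.range m, (((i+1:ℕ):ℝ) ^ (1-r) - ((i:ℕ):ℝ) ^ (1-r)) := by
          refine Finset.sum_nbij' (fun j => j - 1) (fun i => i + 1) ?_ ?_ ?_ ?_ ?_
          · intro a ha; simp only [Finset.mem_Icc] at ha; simp only [Finset.mem_range]; omega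
          · intro a ha; simp only [Finset.mem_range] at ha; simp only [Finset.mem_Icc]; omega
          · intro a ha; simp only [Finset.mem_Icc] at ha; show a - 1 + 1 = a; omega
          · intro a _; show a + 1 - 1 = a; omega
          · intro a ha
            simp only [Finset.mem_Icc] at ha
            have e1 : a - 1 + 1 = a := by omega
            rw [e1]
            have e2 : ((a - 1 : ℕ):ℝ) = (a:ℝ) - 1 := by
              rw [Nat.cast_sub ha.1]; norm_num
            rw [e2]
        rw [hconv, htel]
        norm_num [Real.zero_rpow hs0.ne']

private lemma auxCoeff {r : ℝ} (hr0 : 0 < r) (hr1 : r < 1) (N m : ℕ) (hN : 1 ≤ N) :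
    ∑ n ∈ Finset.Icc 1 N, (if n ≤ m then (((m:ℝ) + 1) / (((m - n : ℕ):ℝ) + 1)) ^ r else 0)
      ≤ (3 / (1 - r) + 4) * N := by
  have hs0 : (0:ℝ) < 1 - r := by linarith
  have hNR : (1:ℝ) ≤ (N:ℝ) := by exact_mod_cast hN
  rw [← Finset.sum_filter]
  have hfil : (Finset.Icc 1 N).filter (fun n => n ≤ m) = Finset.Icc 1 (min N m) := by
    ext a; simp only [Finset.mem_filter, Finset.mem_Icc, le_min_iff]; omega
  rw [hfil]
  by_cases hm : m ≤ 2 * N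
  · have hterm : ∀ n ∈ Finset.Icc 1 (min N m),
        (((m:ℝ) + 1) / (((m - n : ℕ):ℝ) + 1)) ^ r
          = ((m:ℝ)+1) ^ r * (((m - n + 1 : ℕ):ℝ)) ^ (-r) := by
      intro n _
      have e1 : (((m - n : ℕ):ℝ) + 1) = ((m - n + 1 : ℕ):ℝ) := by push_cast; ring
      rw [e1, Real.div_rpow (by positivity) (by positivity), Real.rpow_neg (by positivity),
        div_eq_mul_inv]
    rw [Finset.sum_congr rfl hterm, ← Finset.mul_sum]
    have himg : ∑ n ∈ Finset.Icc 1 (min N m), (((m - n + 1 : ℕ):ℝ)) ^ (-r)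
        ≤ ∑ j ∈ Finset.Icc 1 m, ((j:ℝ)) ^ (-r) := by
      have hinj : ∀ a ∈ Finset.Icc 1 (min N m), ∀ b ∈ Finset.Icc 1 (min N m),
          m - a + 1 = m - b + 1 → a = b := by
        intro a ha b hb hab
        simp only [Finset.mem_Icc, le_min_iff] at ha hb
        omega
      have h1 : ∑ n ∈ Finset.Icc 1 (min N m), (((m - n + 1 : ℕ):ℝ)) ^ (-r)
          = ∑ j ∈ (Finset.Icc 1 (min N m)).image (fun n => m - n + 1), ((j:ℝ)) ^ (-r) :=
        (Finset.sum_image (f := fun j : ℕ => ((j:ℝ)) ^ (-r)) hinj).symm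
      rw [h1]
      refine Finset.sum_le_sum_of_subset_of_nonneg ?_ ?_
      · intro j hj
        simp only [Finset.mem_image, Finset.mem_Icc, le_min_iff] at hj ⊢
        obtain ⟨n, hn, rfl⟩ := hj
        omega
      · intro j _ _; positivity
    have hm' : (m:ℝ) ≤ 2*(N:ℝ) := by exact_mod_cast hm
    calc ((m:ℝ)+1) ^ r * ∑ n ∈ Finset.Icc 1 (min N m), (((m - n + 1 : ℕ):ℝ)) ^ (-r)
        ≤ ((m:ℝ)+1) ^ r * (((m:ℝ)+1) ^ (1-r) / (1-r)) := by
          refine mul_le_mul_of_nonneg_left ?_ (by positivity)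
          refine le_trans (le_trans himg (auxSum hr0 hr1 m)) ?_
          have h3 : (m:ℝ) ^ (1-r) ≤ ((m:ℝ)+1) ^ (1-r) :=
            Real.rpow_le_rpow (Nat.cast_nonneg m) (by linarith) hs0.le
          gcongr
      _ = ((m:ℝ)+1) / (1-r) := by
          rw [← mul_div_assoc, ← Real.rpow_add (by positivity)]
          have : r + (1 - r) = 1 := by ring
          rw [this, Real.rpow_one]
      _ ≤ (3*(N:ℝ)) / (1-r) := by gcongr; linarith
      _ = (3 / (1-r)) * N := by ring
      _ ≤ (3 / (1 - r) + 4) * N := by nlinarith [hNR]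
  · have hmin : min N m = N := min_eq_left (by omega)
    rw [hmin]
    have hbound : ∀ n ∈ Finset.Icc 1 N,
        (((m:ℝ) + 1) / (((m - n : ℕ):ℝ) + 1)) ^ r ≤ 4 := by
      intro n hn
      rw [Finset.mem_Icc] at hn
      have h1 : (n:ℝ) ≤ (N:ℝ) := by exact_mod_cast hn.2
      have h2 : ((m - n : ℕ):ℝ) = (m:ℝ) - (n:ℝ) := by
        rw [Nat.cast_sub (by omega)]
      have h3 : 2*(N:ℝ) < (m:ℝ) := by exact_mod_cast Nat.lt_of_not_le hm
      have hb : ((m:ℝ)+1)/(((m - n : ℕ):ℝ)+1) ≤ 4 := by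
        rw [div_le_iff₀ (by positivity), h2]
        linarith
      calc (((m:ℝ) + 1) / (((m - n : ℕ):ℝ) + 1)) ^ r ≤ (4:ℝ) ^ r :=
            Real.rpow_le_rpow (by positivity) hb hr0.le
        _ ≤ (4:ℝ) ^ (1:ℝ) := Real.rpow_le_rpow_of_exponent_le (by norm_num) (by linarith)
        _ = 4 := Real.rpow_one 4
    calc ∑ n ∈ Finset.Icc 1 N, (((m:ℝ) + 1) / (((m - n : ℕ):ℝ) + 1)) ^ r
        ≤ ∑ _n ∈ Finset.Icc 1 N, (4:ℝ) := Finset.sum_le_sum hbound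
      _ = 4 * N := by
          rw [Finset.sum_const, Nat.card_Icc, nsmul_eq_mul]
          push_cast [Nat.add_sub_cancel]
          ring
      _ ≤ (3 / (1 - r) + 4) * N := by
          have h4 : (0:ℝ) ≤ 3 / (1-r) := by positivity
          nlinarith [hNR]

/-- For `1 ≤ p < q < ∞`, the unilateral weighted backward shift on `ℓ^p(ℕ)` with weights
`w_n = ((n+1)/n)^{1/q}` (here `0`-indexed: `w n = ((n+2)/(n+1))^{1/q}`) is `p`-absolutely
Cesàro bounded but not `q`-absolutely Cesàro bounded; in particular it is not power-bounded. -/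
theorem stmt11 (p q : ℝ) (hp : 1 ≤ p) (hpq : p < q) [Fact (1 ≤ ENNReal.ofReal p)]
    (w : ℕ → ℝ) (hw : ∀ n : ℕ, w n = (((n : ℝ) + 2) / ((n : ℝ) + 1)) ^ (1 / q))
    (B : lp (fun _ : ℕ => ℝ) (ENNReal.ofReal p) →L[ℝ] lp (fun _ : ℕ => ℝ) (ENNReal.ofReal p))
    (hB : ∀ (x : lp (fun _ : ℕ => ℝ) (ENNReal.ofReal p)) (n : ℕ),
      (B x : ∀ _ : ℕ, ℝ) n = w n * x (n + 1)) :
    (∃ C : ℝ, 0 < C ∧ ∀ x : lp (fun _ : ℕ => ℝ) (ENNReal.ofReal p), ∀ N : ℕ, 1 ≤ N →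
        (1 / N : ℝ) * ∑ n ∈ Finset.Icc 1 N, ‖(B ^ n) x‖ ^ p ≤ C * ‖x‖ ^ p) ∧
    ¬ (∃ C : ℝ, 0 < C ∧ ∀ x : lp (fun _ : ℕ => ℝ) (ENNReal.ofReal p), ∀ N : ℕ, 1 ≤ N →
        (1 / N : ℝ) * ∑ n ∈ Finset.Icc 1 N, ‖(B ^ n) x‖ ^ q ≤ C * ‖x‖ ^ q) ∧
    ¬ (∃ C : ℝ, 0 < C ∧ ∀ n : ℕ, 1 ≤ n → ‖B ^ n‖ ≤ C) := by
  have hq1 : (1:ℝ) < q := lt_of_le_of_lt hp hpq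
  have hq0 : (0:ℝ) < q := by linarith
  have hp0 : (0:ℝ) < p := by linarith
  have hP : (ENNReal.ofReal p).toReal = p := ENNReal.toReal_ofReal hp0.le
  have hr0 : (0:ℝ) < p / q := div_pos hp0 hq0
  have hr1 : p / q < 1 := (div_lt_one hq0).2 hpq
  have hs0 : (0:ℝ) < 1 - p / q := by linarith
  set c : ℕ → ℝ := fun k => ((k:ℝ) + 1) ^ (1/q) with hcdef
  have hcpos : ∀ k, 0 < c k := fun k => Real.rpow_pos_of_pos (by positivity) _
  have hwc : ∀ k, w k = c (k+1) / c k := by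
    intro k
    rw [hw]
    simp only [hcdef]
    rw [← Real.div_rpow (by positivity) (by positivity)]
    push_cast
    ring_nf
  have key : ∀ (n : ℕ) (x : lp (fun _ : ℕ => ℝ) (ENNReal.ofReal p)) (k : ℕ),
      ((B ^ n) x : ∀ _ : ℕ, ℝ) k = (c (k+n) / c k) * x (k+n) := by
    intro n
    induction n with
    | zero =>
        intro x k
        simp [div_self (hcpos k).ne']
    | succ n ih =>
        intro x k
        have hstep : (B ^ (n+1)) x = (B ^ n) (B x) := by
          rw [pow_succ, ContinuousLinearMap.mul_apply]
        rw [hstep, ih (B x) k, hB x (k+n), hwc (k+n)]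
        have e1 : k + n + 1 = k + (n+1) := by omega
        rw [e1]
        have h1 : c (k+n) ≠ 0 := (hcpos _).ne'
        have h2 : c k ≠ 0 := (hcpos _).ne'
        field_simp
  have normp : ∀ y : lp (fun _ : ℕ => ℝ) (ENNReal.ofReal p),
      ‖y‖ ^ p = ∑' k, ‖(y : ∀ _ : ℕ, ℝ) k‖ ^ p := by
    intro y
    have := lp.norm_rpow_eq_tsum (p := ENNReal.ofReal p) (by rw [hP]; exact hp0) y
    rwa [hP] at this
  have hcoefpow : ∀ a b : ℕ, (c a / c b) ^ p = (((a:ℝ)+1)/((b:ℝ)+1)) ^ (p/q) := by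
    intro a b
    simp only [hcdef]
    rw [← Real.div_rpow (by positivity) (by positivity),
      ← Real.rpow_mul (by positivity)]
    rw [one_div, inv_mul_eq_div]
  have hterm : ∀ (n : ℕ) (x : lp (fun _ : ℕ => ℝ) (ENNReal.ofReal p)) (k : ℕ),
      ‖((B ^ n) x : ∀ _ : ℕ, ℝ) k‖ ^ p
        = ((((k+n:ℕ):ℝ)+1)/(((k:ℕ):ℝ)+1)) ^ (p/q) * ‖(x : ∀ _ : ℕ, ℝ) (k+n)‖ ^ p := by
    intro n x k
    rw [key n x k, norm_mul, Real.mul_rpow (norm_nonneg _) (norm_nonneg _)]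
    congr 1
    rw [Real.norm_of_nonneg (div_pos (hcpos _) (hcpos _)).le]
    exact hcoefpow (k+n) k
  have hnorm_single : ∀ N : ℕ,
      ‖lp.single (E := fun _ : ℕ => ℝ) (ENNReal.ofReal p) N (1:ℝ)‖ = 1 := by
    intro N
    have := lp.norm_single (p := ENNReal.ofReal p) (E := fun _ : ℕ => ℝ)
      (ENNReal.ofReal_pos.2 hp0) N (1:ℝ)
    simpa using this
  have hy : ∀ t : ℝ, 0 ≤ t → (t ^ p) ^ (1/p) = t := by
    intro t ht
    rw [← Real.rpow_mul ht, mul_one_div, div_self hp0.ne', Real.rpow_one]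
  have hBe : ∀ N n : ℕ, n ≤ N →
      ‖(B ^ n) (lp.single (ENNReal.ofReal p) N (1:ℝ))‖ = c N / c (N - n) := by
    intro N n hn
    have hpow : ‖(B ^ n) (lp.single (ENNReal.ofReal p) N (1:ℝ))‖ ^ p
        = (c N / c (N - n)) ^ p := by
      rw [normp]
      rw [tsum_eq_single (N - n) ?_]
      · rw [key n _ (N - n)]
        have hNn : N - n + n = N := by omega
        rw [hNn, lp.single_apply_self, mul_one,
          Real.norm_of_nonneg (div_pos (hcpos _) (hcpos _)).le]
      · intro k hk
        rw [key n _ k, lp.single_apply_ne _ _ _ (show k + n ≠ N by omega), mul_zero,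
          norm_zero, Real.zero_rpow hp0.ne']
    calc ‖(B ^ n) (lp.single (ENNReal.ofReal p) N (1:ℝ))‖
        = (‖(B ^ n) (lp.single (ENNReal.ofReal p) N (1:ℝ))‖ ^ p) ^ (1/p) :=
          (hy _ (norm_nonneg _)).symm
      _ = ((c N / c (N - n)) ^ p) ^ (1/p) := by rw [hpow]
      _ = c N / c (N - n) := hy _ (div_pos (hcpos _) (hcpos _)).le
  refine ⟨?_, ?_, ?_⟩
  · -- p-absolutely Cesàro bounded
    refine ⟨3 / (1 - p/q) + 4, by positivity, ?_⟩
    intro x N hN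
    set G : ℕ → ℕ → ℝ := fun n m =>
      (if n ≤ m then (((m:ℝ) + 1) / (((m - n : ℕ):ℝ) + 1)) ^ (p/q) else 0)
        * ‖(x : ∀ _ : ℕ, ℝ) m‖ ^ p with hGdef
    have hinj : ∀ n : ℕ, Function.Injective (fun k : ℕ => k + n) := by
      intro n a b h
      simpa using h
    have hcomp : ∀ n k, G n (k + n) = ‖((B ^ n) x : ∀ _ : ℕ, ℝ) k‖ ^ p := by
      intro n k
      simp only [hGdef]
      rw [if_pos (Nat.le_add_left n k), Nat.add_sub_cancel, hterm n x k]
    have hsupp : ∀ n : ℕ, ∀ m, m ∉ Set.range (fun k : ℕ => k + n) → G n m = 0 := by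
      intro n m hm
      have hnm : ¬ (n ≤ m) := by
        intro h
        exact hm ⟨m - n, show m - n + n = m by omega⟩
      simp only [hGdef, if_neg hnm, zero_mul]
    have hGsum : ∀ n, Summable (G n) := by
      intro n
      rw [← Function.Injective.summable_iff (hinj n) (hsupp n)]
      have he : (G n) ∘ (fun k : ℕ => k + n)
          = fun k => ‖((B ^ n) x : ∀ _ : ℕ, ℝ) k‖ ^ p := by
        funext k
        exact hcomp n k
      rw [he]
      have := (lp.memℓp ((B ^ n) x)).summable (by rw [hP]; exact hp0)
      rwa [hP] at this
    have hnorm_pow : ∀ n : ℕ, ‖(B ^ n) x‖ ^ p = ∑' m, G n m := by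
      intro n
      rw [normp ((B ^ n) x)]
      rw [← Function.Injective.tsum_eq (hinj n) (f := G n) ?_]
      · exact tsum_congr fun k => (hcomp n k).symm
      · intro m hm
        by_contra hmr
        exact hm (hsupp n m hmr)
    have hswap : ∑ n ∈ Finset.Icc 1 N, ‖(B ^ n) x‖ ^ p
        = ∑' m, ∑ n ∈ Finset.Icc 1 N, G n m := by
      rw [Finset.sum_congr rfl (fun n _ => hnorm_pow n)]
      exact (Summable.tsum_finsetSum (fun n _ => hGsum n)).symm
    have hxsum : Summable (fun m => ‖(x : ∀ _ : ℕ, ℝ) m‖ ^ p) := by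
      have := (lp.memℓp x).summable (by rw [hP]; exact hp0)
      rwa [hP] at this
    have hpt : ∀ m, ∑ n ∈ Finset.Icc 1 N, G n m
        ≤ ((3 / (1 - p/q) + 4) * N) * ‖(x : ∀ _ : ℕ, ℝ) m‖ ^ p := by
      intro m
      simp only [hGdef]
      rw [← Finset.sum_mul]
      exact mul_le_mul_of_nonneg_right (auxCoeff hr0 hr1 N m hN) (by positivity)
    have hle : ∑' m, ∑ n ∈ Finset.Icc 1 N, G n m
        ≤ ∑' m, ((3 / (1 - p/q) + 4) * N) * ‖(x : ∀ _ : ℕ, ℝ) m‖ ^ p := by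
      refine Summable.tsum_le_tsum hpt ?_ ?_
      · exact summable_sum (fun n _ => hGsum n)
      · exact hxsum.mul_left _
    have htsum : ∑' m, ((3 / (1 - p/q) + 4) * N) * ‖(x : ∀ _ : ℕ, ℝ) m‖ ^ p
        = ((3 / (1 - p/q) + 4) * N) * ‖x‖ ^ p := by
      rw [tsum_mul_left, ← normp x]
    have hN0 : (0:ℝ) < N := by exact_mod_cast hN
    rw [hswap]
    calc (1/(N:ℝ)) * ∑' m, ∑ n ∈ Finset.Icc 1 N, G n m
        ≤ (1/(N:ℝ)) * (((3 / (1 - p/q) + 4) * N) * ‖x‖ ^ p) := by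
          exact mul_le_mul_of_nonneg_left (le_trans hle (le_of_eq htsum)) (by positivity)
      _ = (3 / (1 - p/q) + 4) * ‖x‖ ^ p := by
          field_simp
  · -- not q-absolutely Cesàro bounded
    rintro ⟨C, hC, h⟩
    obtain ⟨N, hCN, hN1⟩ :
        ∃ N : ℕ, C < ∑ i ∈ Finset.range N, (1 / ((i:ℝ) + 1)) ∧ 1 ≤ N := by
      have ht := Real.tendsto_sum_range_one_div_nat_succ_atTop
      obtain ⟨N, h1, h2⟩ := ((ht.eventually_gt_atTop C).and (Filter.eventually_ge_atTop 1)).exists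
      exact ⟨N, h1, h2⟩
    have hH : ∑ i ∈ Finset.range N, (1 / ((i:ℝ) + 1))
        = ∑ j ∈ Finset.Icc 1 N, (1/(j:ℝ)) := by
      refine Finset.sum_nbij' (fun i => i + 1) (fun j => j - 1) ?_ ?_ ?_ ?_ ?_
      · intro a ha; simp only [Finset.mem_range] at ha; simp only [Finset.mem_Icc]; omega
      · intro a ha; simp only [Finset.mem_Icc] at ha; simp only [Finset.mem_range]; omega
      · intro a _; show a + 1 - 1 = a; omega
      · intro a ha; simp only [Finset.mem_Icc] at ha; show a - 1 + 1 = a; omega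
      · intro a _; push_cast; ring
    have hq' := h (lp.single (ENNReal.ofReal p) N 1) N hN1
    rw [hnorm_single, Real.one_rpow, mul_one] at hq'
    have hterm' : ∀ n ∈ Finset.Icc 1 N,
        ‖(B ^ n) (lp.single (ENNReal.ofReal p) N (1:ℝ))‖ ^ q
          = ((N:ℝ)+1) * (1/(((N - n:ℕ):ℝ)+1)) := by
      intro n hn
      rw [Finset.mem_Icc] at hn
      rw [hBe N n hn.2]
      have e1 : c N / c (N - n) = (((N:ℝ)+1)/(((N - n:ℕ):ℝ)+1)) ^ (1/q) := by
        simp only [hcdef]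
        exact (Real.div_rpow (by positivity) (by positivity) _).symm
      rw [e1, ← Real.rpow_mul (by positivity), one_div_mul_cancel hq0.ne', Real.rpow_one,
        mul_one_div]
    have hsum' : ∑ n ∈ Finset.Icc 1 N, ‖(B ^ n) (lp.single (ENNReal.ofReal p) N (1:ℝ))‖ ^ q
        = ((N:ℝ)+1) * ∑ j ∈ Finset.Icc 1 N, (1/(j:ℝ)) := by
      rw [Finset.sum_congr rfl hterm', ← Finset.mul_sum]
      congr 1
      refine Finset.sum_nbij' (fun n => N - n + 1) (fun j => N - j + 1) ?_ ?_ ?_ ?_ ?_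
      · intro a ha; simp only [Finset.mem_Icc] at ha ⊢; omega
      · intro a ha; simp only [Finset.mem_Icc] at ha ⊢; omega
      · intro a ha; simp only [Finset.mem_Icc] at ha; show N - (N - a + 1) + 1 = a; omega
      · intro a ha; simp only [Finset.mem_Icc] at ha; show N - (N - a + 1) + 1 = a; omega
      · intro a ha
        simp only [Finset.mem_Icc] at ha
        rw [show ((N - a + 1 : ℕ):ℝ) = ((N - a : ℕ):ℝ) + 1 from by push_cast; ring]
    rw [hsum'] at hq'
    have hNR : (1:ℝ) ≤ (N:ℝ) := by exact_mod_cast hN1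
    have hNpos : (0:ℝ) < (N:ℝ) := by linarith
    set H := ∑ j ∈ Finset.Icc 1 N, (1/(j:ℝ)) with hHdef
    have hCH : C < H := by rw [← hH]; exact hCN
    have hmul : ((N:ℝ)+1) * H ≤ C * N := by
      have h2 := mul_le_mul_of_nonneg_left hq' hNpos.le
      rw [← mul_assoc, mul_one_div, div_self hNpos.ne', one_mul] at h2
      linarith
    nlinarith [mul_pos (show (0:ℝ) < (N:ℝ)+1 by linarith) (sub_pos.mpr hCH)]
  · -- not power-bounded
    rintro ⟨C, hC, h⟩
    set n : ℕ := ⌈C ^ q⌉₊ + 1 with hn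
    have hle : ‖(B ^ n) (lp.single (ENNReal.ofReal p) n (1:ℝ))‖ ≤ C := by
      calc ‖(B ^ n) (lp.single (ENNReal.ofReal p) n (1:ℝ))‖
          ≤ ‖B ^ n‖ * ‖lp.single (E := fun _ : ℕ => ℝ) (ENNReal.ofReal p) n (1:ℝ)‖ :=
            (B ^ n).le_opNorm _
        _ = ‖B ^ n‖ := by rw [hnorm_single, mul_one]
        _ ≤ C := h n (by omega)
    have heq : ‖(B ^ n) (lp.single (ENNReal.ofReal p) n (1:ℝ))‖ = c n := by
      rw [hBe n n le_rfl, Nat.sub_self]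
      have hc0 : c 0 = 1 := by
        simp only [hcdef]
        norm_num
      rw [hc0, div_one]
    have hlt : C < c n := by
      have h1 : C ^ q < (n:ℝ) + 1 := by
        have h2 : C ^ q ≤ (⌈C ^ q⌉₊ : ℝ) := Nat.le_ceil _
        have h3 : ((⌈C ^ q⌉₊ : ℕ):ℝ) < (n:ℝ) + 1 := by
          rw [hn]; push_cast; linarith
        linarith
      calc C = (C ^ q) ^ (1/q) := by
            rw [← Real.rpow_mul hC.le, mul_one_div, div_self hq0.ne', Real.rpow_one]
        _ < ((n:ℝ)+1) ^ (1/q) :=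
            Real.rpow_lt_rpow (Real.rpow_nonneg hC.le q) h1 (by positivity)
        _ = c n := by simp only [hcdef]
    rw [heq] at hle
    linarith
end

section
/- For any weighted composition operator C_{w,f} on C_0(Ω) (1 ≤ p < ∞), N_p(C_{w,f}) := sup_{‖φ‖=1} sup_{N∈ℕ} (1/N) Σ_{n=1}^N ‖(C_{w,f})^n φ‖^p equals sup_{N∈ℕ} (1/N) Σ_{n=1}^N ‖w^{(n)}‖_∞^p; in particular, C_{w,f} is p-absolutely Cesàro bounded if and only if sup_{N} (1/N) Σ_{n=1}^N ‖w^{(n)}‖_∞^p < ∞. -/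
open scoped ENNReal ZeroAtInfty
open Filter Topology Set

section Stmt14Aux

variable {Ω : Type*} [TopologicalSpace Ω]

lemma stmt14_c0_apply_le_norm (φ : C₀(Ω, ℝ)) (x : Ω) : |φ x| ≤ ‖φ‖ := by
  rw [← ZeroAtInftyContinuousMap.norm_toBCF_eq_norm, ← Real.norm_eq_abs]
  exact BoundedContinuousFunction.norm_coe_le_norm φ.toBCF x

lemma stmt14_c0_norm_le (φ : C₀(Ω, ℝ)) {C : ℝ} (hC : 0 ≤ C) (h : ∀ x, |φ x| ≤ C) :
    ‖φ‖ ≤ C := by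
  rw [← ZeroAtInftyContinuousMap.norm_toBCF_eq_norm]
  exact (BoundedContinuousFunction.norm_le hC).2 (fun x => by
    rw [Real.norm_eq_abs]; exact h x)

end Stmt14Aux

/-- For a weighted composition operator `C_{w,f}` on `C₀(Ω)`,
`N_p(C_{w,f}) = sup_N (1/N) Σ_{n=1}^N ‖w^{(n)}‖_∞^p`; in particular `C_{w,f}` is
`p`-absolutely Cesàro bounded iff this supremum is finite. -/
theorem stmt14 {Ω : Type*} [TopologicalSpace Ω] [LocallyCompactSpace Ω] [T2Space Ω]
    (p : ℝ) (hp : 1 ≤ p)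
    (w : Ω → ℝ) (hw : Continuous w) (hwb : ∃ C : ℝ, ∀ x, |w x| ≤ C)
    (f : Ω → Ω) (hf : Continuous f)
    (hcpt : ∀ ε : ℝ, 0 < ε → ∀ K : Set Ω, IsCompact K →
      IsCompact {x : Ω | f x ∈ K ∧ ε ≤ |w x|})
    (T : C₀(Ω, ℝ) →L[ℝ] C₀(Ω, ℝ))
    (hT : ∀ (φ : C₀(Ω, ℝ)) (x : Ω), T φ x = φ (f x) * w x) :
    (⨆ φ : {φ : C₀(Ω, ℝ) // ‖φ‖ = 1}, ⨆ N : ℕ, ⨆ _ : 1 ≤ N,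
        ENNReal.ofReal ((1 / N : ℝ) * ∑ n ∈ Finset.Icc 1 N, ‖(T ^ n) φ.1‖ ^ p))
      = (⨆ N : ℕ, ⨆ _ : 1 ≤ N,
          ENNReal.ofReal ((1 / N : ℝ) * ∑ n ∈ Finset.Icc 1 N,
            (⨆ x : Ω, |∏ j ∈ Finset.range n, w (f^[j] x)|) ^ p)) ∧
    ((∃ C : ℝ, 0 < C ∧ ∀ φ : C₀(Ω, ℝ), ∀ N : ℕ, 1 ≤ N →
        (1 / N : ℝ) * ∑ n ∈ Finset.Icc 1 N, ‖(T ^ n) φ‖ ^ p ≤ C * ‖φ‖ ^ p) ↔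
      (⨆ N : ℕ, ⨆ _ : 1 ≤ N,
          ENNReal.ofReal ((1 / N : ℝ) * ∑ n ∈ Finset.Icc 1 N,
            (⨆ x : Ω, |∏ j ∈ Finset.range n, w (f^[j] x)|) ^ p)) ≠ ⊤) := by
  have hp0 : (0 : ℝ) ≤ p := le_trans zero_le_one hp
  have hpne : p ≠ 0 := by linarith
  set wn : ℕ → Ω → ℝ := fun n x => ∏ j ∈ Finset.range n, w (f^[j] x) with hwn
  set W : ℕ → ℝ := fun n => ⨆ x : Ω, |wn n x| with hWdef
  -- the iterate formula
  have hpow : ∀ (n : ℕ) (φ : C₀(Ω, ℝ)) (x : Ω),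
      (T ^ n) φ x = φ (f^[n] x) * wn n x := by
    intro n
    induction n with
    | zero => intro φ x; simp [hwn]
    | succ n ih =>
      intro φ x
      rw [pow_succ, ContinuousLinearMap.mul_apply, ih (T φ) x, hT,
        Function.iterate_succ_apply']
      simp only [hwn, Finset.prod_range_succ]
      ring
  obtain ⟨C, hC⟩ := hwb
  have hwnbdd : ∀ n x, |wn n x| ≤ |C| ^ n := by
    intro n x
    rw [hwn]
    calc |∏ j ∈ Finset.range n, w (f^[j] x)|
        = ∏ j ∈ Finset.range n, |w (f^[j] x)| := Finset.abs_prod _ _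
      _ ≤ ∏ _j ∈ Finset.range n, |C| := Finset.prod_le_prod
            (fun j _ => abs_nonneg _) (fun j _ => le_trans (hC _) (le_abs_self C))
      _ = |C| ^ n := by rw [Finset.prod_const, Finset.card_range]
  have hbdd : ∀ n, BddAbove (Set.range fun x : Ω => |wn n x|) := by
    intro n
    exact ⟨|C| ^ n, by rintro _ ⟨x, rfl⟩; exact hwnbdd n x⟩
  have hW0 : ∀ n, 0 ≤ W n := fun n => Real.iSup_nonneg (fun x => abs_nonneg _)
  have hWle : ∀ n (x : Ω), |wn n x| ≤ W n := fun n x => le_ciSup (hbdd n) x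
  -- upper bound on norms of iterates
  have hTle : ∀ (n : ℕ) (φ : C₀(Ω, ℝ)), ‖(T ^ n) φ‖ ≤ W n * ‖φ‖ := by
    intro n φ
    refine stmt14_c0_norm_le _ (mul_nonneg (hW0 n) (norm_nonneg φ)) (fun x => ?_)
    rw [hpow n φ x, abs_mul, mul_comm (W n) ‖φ‖]
    exact mul_le_mul (stmt14_c0_apply_le_norm φ _) (hWle n x) (abs_nonneg _)
      (norm_nonneg φ)
  -- key approximation lemma (nonempty case)
  have key : ∀ (hΩ : Nonempty Ω) (N : ℕ), 1 ≤ N → ∀ ε : ℝ, 0 < ε →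
      ∃ φ : C₀(Ω, ℝ), ‖φ‖ = 1 ∧ ∀ n ∈ Finset.Icc 1 N, W n - ε ≤ ‖(T ^ n) φ‖ := by
    intro hΩ N hN ε hε
    classical
    have hx : ∀ n : ℕ, ∃ x : Ω, W n - ε < |wn n x| := by
      intro n
      refine exists_lt_of_lt_ciSup ?_
      exact sub_lt_self _ hε
    choose xs hxs using hx
    set K : Set Ω := ↑((Finset.Icc 1 N).image fun n => f^[n] (xs n)) with hK
    have hKcpt : IsCompact K := (Finset.finite_toSet _).isCompact
    obtain ⟨g, hg1, hg0, hgc, hg01⟩ :=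
      exists_continuous_one_zero_of_isCompact hKcpt isClosed_empty (disjoint_empty K)
    set φ : C₀(Ω, ℝ) := ⟨g, hgc.is_zero_at_infty⟩ with hφ
    have hφval : ∀ x, φ x = g x := fun x => rfl
    have hmem : ∀ n ∈ Finset.Icc 1 N, φ (f^[n] (xs n)) = 1 := by
      intro n hn
      have : f^[n] (xs n) ∈ K := by
        rw [hK]
        exact Finset.mem_coe.2 (Finset.mem_image.2 ⟨n, hn, rfl⟩)
      simpa [hφval] using hg1 this
    have hφnorm : ‖φ‖ = 1 := by
      refine le_antisymm (stmt14_c0_norm_le φ zero_le_one (fun x => ?_)) ?_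
      · rw [hφval, abs_le]
        exact ⟨le_trans (by norm_num) (hg01 x).1, (hg01 x).2⟩
      · have h1 : (1 : ℕ) ∈ Finset.Icc 1 N := Finset.mem_Icc.2 ⟨le_refl 1, hN⟩
        have := stmt14_c0_apply_le_norm φ (f^[1] (xs 1))
        rw [hmem 1 h1] at this
        simpa using this
    refine ⟨φ, hφnorm, fun n hn => ?_⟩
    have := stmt14_c0_apply_le_norm ((T ^ n) φ) (xs n)
    rw [hpow n φ (xs n), hmem n hn, one_mul] at this
    exact le_trans (hxs n).le this
  -- the main equality
  have eq1 : (⨆ φ : {φ : C₀(Ω, ℝ) // ‖φ‖ = 1}, ⨆ N : ℕ, ⨆ _ : 1 ≤ N,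
        ENNReal.ofReal ((1 / N : ℝ) * ∑ n ∈ Finset.Icc 1 N, ‖(T ^ n) φ.1‖ ^ p))
      = (⨆ N : ℕ, ⨆ _ : 1 ≤ N,
          ENNReal.ofReal ((1 / N : ℝ) * ∑ n ∈ Finset.Icc 1 N, (W n) ^ p)) := by
    apply le_antisymm
    · refine iSup_le fun φ => iSup_le fun N => iSup_le fun hN => ?_
      refine le_trans ?_ (le_iSup_of_le N (le_iSup_of_le hN le_rfl))
      apply ENNReal.ofReal_le_ofReal
      refine mul_le_mul_of_nonneg_left (Finset.sum_le_sum fun n _ => ?_) (by positivity)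
      refine Real.rpow_le_rpow (norm_nonneg _) ?_ hp0
      have := hTle n φ.1
      rwa [φ.2, mul_one] at this
    · refine iSup_le fun N => iSup_le fun hN => ?_
      rcases isEmpty_or_nonempty Ω with hΩ | hΩ
      · have hWz : ∀ n, W n = 0 := fun n => Real.iSup_of_isEmpty _
        have : ((1 / N : ℝ) * ∑ n ∈ Finset.Icc 1 N, (W n) ^ p) = 0 := by
          rw [Finset.sum_eq_zero, mul_zero]
          intro n _
          rw [hWz n, Real.zero_rpow hpne]
        rw [this, ENNReal.ofReal_zero]
        exact zero_le
      · -- choose approximating functions along ε = 1/(k+1)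
        have hεpos : ∀ k : ℕ, (0 : ℝ) < 1 / (k + 1) := fun k => by positivity
        choose φk hφk1 hφk2 using fun k : ℕ => key hΩ N hN (1 / (k + 1)) (hεpos k)
        set a : ℕ → ℝ := fun k =>
          (1 / N : ℝ) * ∑ n ∈ Finset.Icc 1 N, ‖(T ^ n) (φk k)‖ ^ p with ha
        have h1 : ∀ k, ENNReal.ofReal (a k) ≤
            ⨆ φ : {φ : C₀(Ω, ℝ) // ‖φ‖ = 1}, ⨆ N : ℕ, ⨆ _ : 1 ≤ N,
              ENNReal.ofReal ((1 / N : ℝ) * ∑ n ∈ Finset.Icc 1 N, ‖(T ^ n) φ.1‖ ^ p) := by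
          intro k
          exact le_iSup_of_le ⟨φk k, hφk1 k⟩ (le_iSup_of_le N (le_iSup_of_le hN le_rfl))
        have hnorm_tendsto : ∀ n ∈ Finset.Icc 1 N,
            Tendsto (fun k => ‖(T ^ n) (φk k)‖) atTop (𝓝 (W n)) := by
          intro n hn
          have hub : ∀ k, ‖(T ^ n) (φk k)‖ ≤ W n := by
            intro k
            have := hTle n (φk k)
            rwa [hφk1 k, mul_one] at this
          have hlb : ∀ k, W n - 1 / (k + 1) ≤ ‖(T ^ n) (φk k)‖ := fun k => hφk2 k n hn
          have hlow : Tendsto (fun k : ℕ => W n - 1 / (k + 1 : ℝ)) atTop (𝓝 (W n)) := by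
            have := tendsto_one_div_add_atTop_nhds_zero_nat (𝕜 := ℝ)
            simpa using tendsto_const_nhds.sub this
          exact tendsto_of_tendsto_of_tendsto_of_le_of_le hlow tendsto_const_nhds hlb hub
        have h2 : Tendsto (fun k => a k) atTop
            (𝓝 ((1 / N : ℝ) * ∑ n ∈ Finset.Icc 1 N, (W n) ^ p)) := by
          refine Tendsto.const_mul _ ?_
          refine tendsto_finset_sum _ (fun n hn => ?_)
          have hc : ContinuousAt (fun x : ℝ => x ^ p) (W n) :=
            Real.continuousAt_rpow_const (W n) p (Or.inr hp0)
          exact hc.tendsto.comp (hnorm_tendsto n hn)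
        have h3 : Tendsto (fun k => ENNReal.ofReal (a k)) atTop
            (𝓝 (ENNReal.ofReal ((1 / N : ℝ) * ∑ n ∈ Finset.Icc 1 N, (W n) ^ p))) :=
          (ENNReal.continuous_ofReal.tendsto _).comp h2
        exact le_of_tendsto' h3 h1
  refine ⟨eq1, ?_, ?_⟩
  · rintro ⟨C', hC'0, hC'⟩
    rw [← eq1]
    refine ne_top_of_le_ne_top (ENNReal.ofReal_ne_top : ENNReal.ofReal C' ≠ ⊤)
      (iSup_le fun φ => iSup_le fun N => iSup_le fun hN => ?_)
    apply ENNReal.ofReal_le_ofReal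
    have := hC' φ.1 N hN
    rwa [φ.2, Real.one_rpow, mul_one] at this
  · intro h
    set M := (⨆ N : ℕ, ⨆ _ : 1 ≤ N,
        ENNReal.ofReal ((1 / N : ℝ) * ∑ n ∈ Finset.Icc 1 N, (W n) ^ p)) with hM
    refine ⟨max M.toReal 1, lt_of_lt_of_le one_pos (le_max_right _ _), fun φ N hN => ?_⟩
    have hSnn : (0 : ℝ) ≤ (1 / N : ℝ) * ∑ n ∈ Finset.Icc 1 N, (W n) ^ p := by
      refine mul_nonneg (by positivity) (Finset.sum_nonneg fun n _ => ?_)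
      exact Real.rpow_nonneg (hW0 n) p
    have hSle : (1 / N : ℝ) * ∑ n ∈ Finset.Icc 1 N, (W n) ^ p ≤ M.toReal := by
      have hle : ENNReal.ofReal ((1 / N : ℝ) * ∑ n ∈ Finset.Icc 1 N, (W n) ^ p) ≤ M :=
        le_iSup_of_le N (le_iSup_of_le hN le_rfl)
      calc (1 / N : ℝ) * ∑ n ∈ Finset.Icc 1 N, (W n) ^ p
          = (ENNReal.ofReal ((1 / N : ℝ) * ∑ n ∈ Finset.Icc 1 N, (W n) ^ p)).toReal :=
            (ENNReal.toReal_ofReal hSnn).symm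
        _ ≤ M.toReal := ENNReal.toReal_mono h hle
    have hφp : (0 : ℝ) ≤ ‖φ‖ ^ p := Real.rpow_nonneg (norm_nonneg φ) p
    calc (1 / N : ℝ) * ∑ n ∈ Finset.Icc 1 N, ‖(T ^ n) φ‖ ^ p
        ≤ (1 / N : ℝ) * ∑ n ∈ Finset.Icc 1 N, (W n) ^ p * ‖φ‖ ^ p := by
          refine mul_le_mul_of_nonneg_left (Finset.sum_le_sum fun n _ => ?_) (by positivity)
          rw [← Real.mul_rpow (hW0 n) (norm_nonneg φ)]
          exact Real.rpow_le_rpow (norm_nonneg _) (hTle n φ) hp0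
      _ = ((1 / N : ℝ) * ∑ n ∈ Finset.Icc 1 N, (W n) ^ p) * ‖φ‖ ^ p := by
          rw [← Finset.sum_mul]; ring
      _ ≤ M.toReal * ‖φ‖ ^ p := mul_le_mul_of_nonneg_right hSle hφp
      _ ≤ max M.toReal 1 * ‖φ‖ ^ p :=
          mul_le_mul_of_nonneg_right (le_max_left _ _) hφp
end

section
/- Let w be the sequence on ℕ obtained by concatenating, for n = 2, 3, 4, …, the blocks (e^{1/n}, …, e^{1/n} (n times), 1/e). Then sup_{N∈ℕ} (1/N) Σ_{n=1}^N (sup_{i∈ℕ} |w_i ⋯ w_{i+n-1}|)^p = e^p, while sup_{i∈ℕ, N∈ℕ} (1/N) Σ_{n=1}^{min{N, i-1}} |w_{i-n} ⋯ w_{i-1}|^p < e^p, for any fixed p ∈ [1,∞). In particular, these two Cesàro-type suprema differ for this weight sequence. -/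
open scoped ENNReal
open Finset

private def rep : ℕ → ℕ × ℕ
  | 0 => (2, 0)
  | q + 1 => if (rep q).2 < (rep q).1 then ((rep q).1, (rep q).2 + 1) else ((rep q).1 + 1, 0)

private lemma rep_succ (q : ℕ) : rep (q+1) =
    if (rep q).2 < (rep q).1 then ((rep q).1, (rep q).2 + 1) else ((rep q).1 + 1, 0) := rfl

private lemma rep_zero : rep 0 = (2, 0) := rfl

private lemma rep_two_le (q : ℕ) : 2 ≤ (rep q).1 := by
  induction q with
  | zero => exact le_refl 2
  | succ q ih => rw [rep_succ]; split <;> simp <;> omega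

private lemma rep_le (q : ℕ) : (rep q).2 ≤ (rep q).1 := by
  induction q with
  | zero => simp [rep_zero]
  | succ q ih => rw [rep_succ]; split <;> simp <;> omega

private lemma rep_off_le_self (q : ℕ) : (rep q).2 ≤ q := by
  induction q with
  | zero => simp [rep_zero]
  | succ q ih => rw [rep_succ]; split <;> simp <;> omega

private lemma rep_sub {i : ℕ} : ∀ t, t ≤ (rep i).2 → rep (i - t) = ((rep i).1, (rep i).2 - t) := by
  intro t
  induction t with
  | zero => simp
  | succ t ih =>
    intro ht
    have h1 : rep (i - t) = ((rep i).1, (rep i).2 - t) := ih (by omega)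
    have h2 : i - t = (i - (t+1)) + 1 := by
      have := rep_off_le_self i; omega
    rw [h2, rep_succ] at h1
    rcases lt_or_ge (rep (i - (t+1))).2 (rep (i - (t+1))).1 with h | h
    · rw [if_pos h] at h1
      simp at h1
      obtain ⟨e1, e2⟩ := h1
      ext <;> simp [e1] <;> omega
    · rw [if_neg (not_lt.2 h)] at h1
      simp at h1
      omega

/-- log of the weight at position q -/
private noncomputable def aseq (q : ℕ) : ℝ :=
  if (rep q).2 < (rep q).1 then ((rep q).1 : ℝ)⁻¹ else -1

/-- upper bound for backward partial sums starting at q -/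
private noncomputable def useq (q : ℕ) : ℝ := 1 - ((rep q).2 : ℝ) / ((rep q).1 : ℝ)

private noncomputable def phi (q : ℕ) : ℝ :=
  -(((rep q).2 : ℝ) * (((rep q).1 : ℝ) - ((rep q).2 : ℝ) + 1)) / (2 * ((rep q).1 : ℝ))

private lemma bpos (q : ℕ) : (0:ℝ) < ((rep q).1 : ℝ) := by
  have := rep_two_le q; positivity

private lemma useq_nonneg (q : ℕ) : 0 ≤ useq q := by
  have h := rep_le q
  have hb := bpos q
  have : ((rep q).2 : ℝ) ≤ ((rep q).1 : ℝ) := by exact_mod_cast h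
  rw [useq, sub_nonneg, div_le_one hb]; exact this

private lemma useq_le_one (q : ℕ) : useq q ≤ 1 := by
  have hb := bpos q
  have : (0:ℝ) ≤ ((rep q).2 : ℝ) / ((rep q).1 : ℝ) := by positivity
  simp [useq]; linarith

private lemma phi_nonpos (q : ℕ) : phi q ≤ 0 := by
  have h := rep_le q
  have hb := bpos q
  have h2 : ((rep q).2 : ℝ) ≤ ((rep q).1 : ℝ) := by exact_mod_cast h
  have h0 : (0:ℝ) ≤ ((rep q).2 : ℝ) := by positivity
  rw [phi, neg_div, neg_nonpos]
  apply div_nonneg _ (by linarith)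
  nlinarith

private lemma phi_eq_zero {q : ℕ} (h : (rep q).2 = 0) : phi q = 0 := by
  simp [phi, h]

private lemma aseq_le_half (q : ℕ) : aseq q ≤ 1/2 := by
  rw [aseq]; split
  · have h := rep_two_le q
    have : (2:ℝ) ≤ ((rep q).1 : ℝ) := by exact_mod_cast h
    rw [inv_le_comm₀ (by linarith) (by norm_num)]; norm_num; linarith
  · norm_num

private lemma aseq_le_inv (q : ℕ) : aseq q ≤ ((rep q).1 : ℝ)⁻¹ := by
  rw [aseq]; split
  · exact le_refl _
  · have hb := bpos q
    have : (0:ℝ) ≤ ((rep q).1 : ℝ)⁻¹ := by positivity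
    linarith

private lemma blk_mono : Monotone (fun q => (rep q).1) := by
  apply monotone_nat_of_le_succ
  intro q
  rw [rep_succ]; split <;> simp

private lemma aseq_le_inv_of_le {q r : ℕ} (h : q ≤ r) : aseq r ≤ ((rep q).1 : ℝ)⁻¹ := by
  refine (aseq_le_inv r).trans ?_
  have h1 : (rep q).1 ≤ (rep r).1 := blk_mono h
  have h1' : ((rep q).1 : ℝ) ≤ ((rep r).1 : ℝ) := by exact_mod_cast h1
  exact inv_anti₀ (bpos q) h1'

/-- one-step identity: useq q = useq (q+1) + aseq q -/
private lemma useq_step (q : ℕ) : useq q = useq (q+1) + aseq q := by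
  have hb := bpos q
  have hble := rep_le q
  rcases lt_or_ge (rep q).2 (rep q).1 with h | h
  · rw [aseq, if_pos h, useq, useq, rep_succ, if_pos h]
    push_cast
    field_simp
    ring
  · have heq : (rep q).2 = (rep q).1 := le_antisymm hble h
    rw [aseq, if_neg (not_lt.2 h), useq, useq, rep_succ, if_neg (not_lt.2 h)]
    simp [heq]
    rw [div_self hb.ne']
    ring

/-- one-step identity: useq q = 1/2 + phi q - phi (q+1) -/
private lemma useq_step' (q : ℕ) : useq q = 1/2 + phi q - phi (q+1) := by
  have hb := bpos q
  have hble := rep_le q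
  rcases lt_or_ge (rep q).2 (rep q).1 with h | h
  · rw [useq, phi, phi, rep_succ, if_pos h]
    push_cast
    field_simp
    ring
  · have heq : (rep q).2 = (rep q).1 := le_antisymm hble h
    rw [useq, phi, phi, rep_succ, if_neg (not_lt.2 h)]
    simp only [heq]
    field_simp
    simp

private lemma sum_aseq_le : ∀ (d q : ℕ), ∑ r ∈ Ico q (q+d), aseq r ≤ useq q := by
  intro d
  induction d with
  | zero => intro q; simp [useq_nonneg q]
  | succ d ih =>
    intro q
    have h0 : q + (d+1) = (q+1) + d := by omega
    have hsplit : ∑ r ∈ Ico q (q + (d+1)), aseq r = aseq q + ∑ r ∈ Ico (q+1) ((q+1)+d), aseq r := by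
      rw [h0, Finset.sum_eq_sum_Ico_succ_bot (by omega)]
    rw [hsplit, useq_step q]
    have := ih (q+1)
    linarith

private lemma sum_aseq_le_one (d q : ℕ) : ∑ r ∈ Ico q (q+d), aseq r ≤ 1 :=
  (sum_aseq_le d q).trans (useq_le_one q)

private lemma sum_aseq_le_card (d q : ℕ) :
    ∑ r ∈ Ico q (q+d), aseq r ≤ (d : ℝ) * ((rep q).1 : ℝ)⁻¹ := by
  have : ∀ r ∈ Ico q (q+d), aseq r ≤ ((rep q).1 : ℝ)⁻¹ := by
    intro r hr
    exact aseq_le_inv_of_le (mem_Ico.1 hr).1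
  calc ∑ r ∈ Ico q (q+d), aseq r ≤ ∑ _r ∈ Ico q (q+d), ((rep q).1 : ℝ)⁻¹ :=
        Finset.sum_le_sum this
    _ = (d : ℝ) * ((rep q).1 : ℝ)⁻¹ := by
        rw [Finset.sum_const, Nat.card_Ico]
        simp [nsmul_eq_mul]

private lemma sum_useq : ∀ (d x : ℕ), ∑ q ∈ Ico x (x+d), useq q = d/2 + phi x - phi (x+d) := by
  intro d
  induction d with
  | zero => intro x; simp
  | succ d ih =>
    intro x
    have h : x + (d+1) = (x+d) + 1 := by omega
    rw [h, Finset.sum_Ico_succ_top (by omega), ih x, useq_step' (x+d)]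
    push_cast
    ring


private lemma sum_Icc_id_real (M : ℕ) : ∑ n ∈ Icc 1 M, (n:ℝ) = M*(M+1)/2 := by
  induction M with
  | zero => simp
  | succ M ih =>
    rw [Finset.sum_Icc_succ_top (by omega : 1 ≤ M+1), ih]
    push_cast
    ring

section Main

variable {L : ℕ → ℕ} (hL : ∀ n : ℕ, L n = n * (n + 1) / 2 + n - 2)
variable {w : ℕ → ℝ}
  (hw : ∀ n : ℕ, 2 ≤ n →
      (∀ k : ℕ, k < n → w (L (n - 1) + k) = Real.exp (1 / (n : ℝ))) ∧
        w (L (n - 1) + n) = (Real.exp 1)⁻¹)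

include hL in
private lemma L_one : L 1 = 0 := by rw [hL 1]

include hL in
private lemma L_rec (m : ℕ) (hm : 1 ≤ m) : L (m+1) = L m + m + 2 := by
  have h1 := hL m
  have h2 := hL (m+1)
  have e1 : m*(m+1)/2*2 = m*(m+1) := Nat.div_mul_cancel (Nat.even_mul_succ_self m).two_dvd
  have e2 : (m+1)*(m+1+1)/2*2 = (m+1)*(m+2) := Nat.div_mul_cancel (Nat.even_mul_succ_self (m+1)).two_dvd
  have e3 : (m+1)*(m+2) = m*(m+1) + 2*(m+1) := by ring
  have e4 : 2 ≤ m*(m+1) := by nlinarith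
  omega

include hL in
private lemma rep_specL : ∀ q, q = L ((rep q).1 - 1) + (rep q).2 := by
  intro q
  induction q with
  | zero => simp [rep_zero, L_one hL]
  | succ q ih =>
    have hb := rep_two_le q
    have hk := rep_le q
    rw [rep_succ]
    rcases lt_or_ge (rep q).2 (rep q).1 with h | h
    · rw [if_pos h]; simpa using by omega
    · rw [if_neg (not_lt.2 h)]
      have heq : (rep q).2 = (rep q).1 := le_antisymm hk h
      have hrec : L ((rep q).1) = L ((rep q).1 - 1) + (rep q).1 + 1 := by
        have h1 : (rep q).1 - 1 + 1 = (rep q).1 := by omega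
        have h2 := L_rec hL ((rep q).1 - 1) (by omega)
        rw [h1] at h2
        omega
      simp only [Nat.add_sub_cancel]
      omega

include hL hw in
private lemma w_eq_exp (q : ℕ) : w q = Real.exp (aseq q) := by
  have hb := rep_two_le q
  have hk := rep_le q
  have hq := rep_specL hL q
  rcases lt_or_ge (rep q).2 (rep q).1 with h | h
  · rw [aseq, if_pos h]
    have := (hw (rep q).1 hb).1 (rep q).2 h
    rw [← hq] at this
    rw [this, one_div]
  · have heq : (rep q).2 = (rep q).1 := le_antisymm hk h
    rw [aseq, if_neg (not_lt.2 h)]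
    have hq' : q = L ((rep q).1 - 1) + (rep q).1 := by omega
    have h2 := (hw (rep q).1 hb).2
    rw [← hq'] at h2
    rw [h2, Real.exp_neg]

include hL hw in
private lemma w_pos (q : ℕ) : 0 < w q := by rw [w_eq_exp hL hw]; exact Real.exp_pos _

include hL hw in
private lemma prod_fwd (i n : ℕ) :
    ∏ j ∈ range n, w (i + j) = Real.exp (∑ r ∈ Ico i (i+n), aseq r) := by
  induction n with
  | zero => simp
  | succ n ih =>
    rw [Finset.prod_range_succ, ih, show i + (n+1) = (i+n)+1 from rfl,
      Finset.sum_Ico_succ_top (by omega), Real.exp_add, w_eq_exp hL hw]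

include hL hw in
private lemma prod_back (i n : ℕ) (h : n ≤ i) :
    ∏ j ∈ Icc 1 n, w (i - j) = Real.exp (∑ r ∈ Ico (i-n) i, aseq r) := by
  induction n with
  | zero => simp
  | succ n ih =>
    have h1 : n ≤ i := by omega
    have h2 : i - (n+1) < i := by omega
    have h3 : i - (n+1) + 1 = i - n := by omega
    rw [Finset.prod_Icc_succ_top (by omega : (1:ℕ) ≤ n+1), ih h1, w_eq_exp hL hw,
      Finset.sum_eq_sum_Ico_succ_bot h2, h3, Real.exp_add]
    ring

include hL hw in
private lemma sup_len_one : (⨆ i : ℕ, |∏ j ∈ range 1, w (i + j)|) = Real.exp (1/2) := by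
  have habs : ∀ i : ℕ, |∏ j ∈ range 1, w (i + j)| = Real.exp (aseq i) := by
    intro i
    rw [Finset.prod_range_one, Nat.add_zero, w_eq_exp hL hw, abs_of_pos (Real.exp_pos _)]
  have hub : ∀ i : ℕ, |∏ j ∈ range 1, w (i + j)| ≤ Real.exp (1/2) := by
    intro i
    rw [habs i]
    exact Real.exp_le_exp.2 (aseq_le_half i)
  apply le_antisymm
  · exact ciSup_le hub
  · have h0 : |∏ j ∈ range 1, w (0 + j)| = Real.exp (1/2) := by
      rw [habs 0, aseq, rep_zero]
      norm_num
    rw [← h0]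
    exact le_ciSup ⟨Real.exp (1/2), Set.forall_mem_range.2 hub⟩ 0

include hL hw in
private lemma sup_len_ge_two (n : ℕ) (hn : 2 ≤ n) :
    (⨆ i : ℕ, |∏ j ∈ range n, w (i + j)|) = Real.exp 1 := by
  have habs : ∀ i : ℕ, |∏ j ∈ range n, w (i + j)| = Real.exp (∑ r ∈ Ico i (i+n), aseq r) := by
    intro i
    rw [prod_fwd hL hw, abs_of_pos (Real.exp_pos _)]
  have hub : ∀ i : ℕ, |∏ j ∈ range n, w (i + j)| ≤ Real.exp 1 := by
    intro i
    rw [habs i]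
    exact Real.exp_le_exp.2 (sum_aseq_le_one n i)
  apply le_antisymm
  · exact ciSup_le hub
  · have hprod : ∏ j ∈ range n, w (L (n-1) + j) = Real.exp 1 := by
      have : ∀ j ∈ range n, w (L (n-1) + j) = Real.exp (1 / (n:ℝ)) := by
        intro j hj
        exact (hw n hn).1 j (mem_range.1 hj)
      rw [Finset.prod_congr rfl this, Finset.prod_const, Finset.card_range,
        ← Real.exp_nat_mul]
      congr 1
      field_simp
    have h0 : |∏ j ∈ range n, w (L (n-1) + j)| = Real.exp 1 := by
      rw [hprod, abs_of_pos (Real.exp_pos _)]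
    rw [← h0]
    exact le_ciSup ⟨Real.exp 1, Set.forall_mem_range.2 hub⟩ (L (n-1))

end Main

/-- Let `w` be the `0`-indexed sequence obtained by concatenating, for `n = 2, 3, …`, the
blocks `(e^{1/n}, …, e^{1/n} (n times), 1/e)`; the block for `n` occupies positions
`L (n-1), …, L n - 1` where `L n = n(n+1)/2 + n - 2`.  Then
`sup_N (1/N) Σ_{n=1}^N (sup_i |w_i ⋯ w_{i+n-1}|)^p = e^p`, while
`sup_{i,N} (1/N) Σ_{n=1}^{min{N,i}} |w_{i-n} ⋯ w_{i-1}|^p < e^p`. -/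
theorem stmt15 (p : ℝ) (hp : 1 ≤ p)
    (L : ℕ → ℕ) (hL : ∀ n : ℕ, L n = n * (n + 1) / 2 + n - 2)
    (w : ℕ → ℝ)
    (hw : ∀ n : ℕ, 2 ≤ n →
      (∀ k : ℕ, k < n → w (L (n - 1) + k) = Real.exp (1 / (n : ℝ))) ∧
        w (L (n - 1) + n) = (Real.exp 1)⁻¹) :
    (⨆ N : ℕ, ⨆ _ : 1 ≤ N,
        (1 / N : ℝ) * ∑ n ∈ Finset.Icc 1 N,
          (⨆ i : ℕ, |∏ j ∈ Finset.range n, w (i + j)|) ^ p) = Real.exp 1 ^ p ∧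
    (⨆ i : ℕ, ⨆ N : ℕ, ⨆ _ : 1 ≤ N,
        (1 / N : ℝ) * ∑ n ∈ Finset.Icc 1 (min N i),
          |∏ j ∈ Finset.Icc 1 n, w (i - j)| ^ p) < Real.exp 1 ^ p := by
  have hexp1 : Real.exp 1 ^ p = Real.exp p := Real.exp_one_rpow p
  set E1 : ℝ := Real.exp (1/2) ^ p with hE1def
  set E2 : ℝ := Real.exp 1 ^ p with hE2def
  have hppos : (0:ℝ) < p := by linarith
  have hE1pos : 0 < E1 := Real.rpow_pos_of_pos (Real.exp_pos _) p
  have hE2pos : 0 < E2 := Real.rpow_pos_of_pos (Real.exp_pos _) p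
  have hE1E2 : E1 ≤ E2 :=
    Real.rpow_le_rpow (Real.exp_pos _).le (Real.exp_le_exp.2 (by norm_num)) hppos.le
  constructor
  · -- Part 1
    have hsum : ∀ N : ℕ, 1 ≤ N →
        ∑ n ∈ Finset.Icc 1 N, (⨆ i : ℕ, |∏ j ∈ Finset.range n, w (i + j)|) ^ p
          = E1 + ((N:ℝ) - 1) * E2 := by
      intro N hN
      have hins : Icc 1 N = insert 1 (Icc 2 N) := by
        ext x; simp only [mem_Icc, mem_insert]; omega
      rw [hins, Finset.sum_insert (by simp)]
      have h1 : (⨆ i : ℕ, |∏ j ∈ Finset.range 1, w (i + j)|) ^ p = E1 := by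
        rw [sup_len_one hL hw]
      have h2 : ∀ n ∈ Icc 2 N, (⨆ i : ℕ, |∏ j ∈ Finset.range n, w (i + j)|) ^ p = E2 := by
        intro n hn
        rw [sup_len_ge_two hL hw n (mem_Icc.1 hn).1]
      rw [h1, Finset.sum_congr rfl h2, Finset.sum_const, Nat.card_Icc]
      have hc : ((N + 1 - 2 : ℕ) : ℝ) = (N:ℝ) - 1 := by
        have h2' : N + 1 - 2 = N - 1 := by omega
        rw [h2', Nat.cast_sub hN, Nat.cast_one]
      rw [nsmul_eq_mul, hc]
    have hub : ∀ N : ℕ, (⨆ _ : 1 ≤ N, (1 / N : ℝ) * ∑ n ∈ Finset.Icc 1 N,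
        (⨆ i : ℕ, |∏ j ∈ Finset.range n, w (i + j)|) ^ p) ≤ E2 := by
      intro N
      by_cases hN : 1 ≤ N
      · rw [ciSup_pos hN, hsum N hN]
        have hN1 : (1:ℝ) ≤ (N:ℝ) := by exact_mod_cast hN
        have hNpos : (0:ℝ) < (N:ℝ) := by linarith
        rw [one_div_mul_eq_div, div_le_iff₀ hNpos]
        nlinarith
      · haveI : IsEmpty (1 ≤ N) := ⟨fun h => hN h⟩
        rw [Real.iSup_of_isEmpty]
        exact hE2pos.le
    have hbdd : BddAbove (Set.range (fun N : ℕ => ⨆ _ : 1 ≤ N, (1 / N : ℝ) *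
        ∑ n ∈ Finset.Icc 1 N, (⨆ i : ℕ, |∏ j ∈ Finset.range n, w (i + j)|) ^ p)) :=
      ⟨E2, Set.forall_mem_range.2 hub⟩
    apply le_antisymm (ciSup_le hub)
    have htend : Filter.Tendsto (fun N : ℕ => E2 + (E1 - E2) * (1/(N:ℝ)))
        Filter.atTop (nhds E2) := by
      have h0 := tendsto_one_div_atTop_nhds_zero_nat (𝕜 := ℝ)
      have h2 := h0.const_mul (E1 - E2)
      simpa using tendsto_const_nhds.add h2
    apply le_of_tendsto htend
    filter_upwards [Filter.eventually_ge_atTop 1] with N hN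
    have hN1 : (1:ℝ) ≤ (N:ℝ) := by exact_mod_cast hN
    have hNpos : (0:ℝ) < (N:ℝ) := by linarith
    have heq : E2 + (E1 - E2) * (1/(N:ℝ)) = ⨆ _ : 1 ≤ N, (1 / N : ℝ) *
        ∑ n ∈ Finset.Icc 1 N, (⨆ i : ℕ, |∏ j ∈ Finset.range n, w (i + j)|) ^ p := by
      rw [ciSup_pos hN, hsum N hN]
      field_simp
      ring
    rw [heq]
    exact le_ciSup hbdd N
  · -- Part 2
    set C : ℝ := 1 + (3/4) * (Real.exp p - 1) with hCdef
    have hep1 : (1:ℝ) < Real.exp p := Real.one_lt_exp_iff.2 hppos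
    have hClt : C < E2 := by rw [hexp1, hCdef]; linarith
    have hC0 : (0:ℝ) ≤ C := by rw [hCdef]; linarith
    have hmain : ∀ (i N : ℕ), 1 ≤ N →
        (1 / N : ℝ) * ∑ n ∈ Finset.Icc 1 (min N i),
          |∏ j ∈ Finset.Icc 1 n, w (i - j)| ^ p ≤ C := by
      intro i N hN
      set M := min N i with hMdef
      have hMi : M ≤ i := min_le_right _ _
      have hMN : M ≤ N := min_le_left _ _
      set v : ℕ → ℝ := fun n => min (useq (i-n)) ((n:ℝ) * ((rep (i-n)).1 : ℝ)⁻¹) with hvdef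
      have hv0 : ∀ n, 0 ≤ v n := by
        intro n
        apply le_min (useq_nonneg _)
        have := bpos (i-n)
        positivity
      have hv1 : ∀ n, v n ≤ 1 := fun n => (min_le_left _ _).trans (useq_le_one _)
      have hterm : ∀ n ∈ Icc 1 M, |∏ j ∈ Finset.Icc 1 n, w (i - j)| ^ p
          ≤ 1 + v n * (Real.exp p - 1) := by
        intro n hn
        have hni : n ≤ i := (mem_Icc.1 hn).2.trans hMi
        rw [prod_back hL hw i n hni, abs_of_pos (Real.exp_pos _), ← Real.exp_mul]
        have hSv : (∑ r ∈ Ico (i-n) i, aseq r) ≤ v n := by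
          have hIco : i = (i-n) + n := by omega
          apply le_min
          · calc (∑ r ∈ Ico (i-n) i, aseq r)
                = ∑ r ∈ Ico (i-n) ((i-n)+n), aseq r := by rw [← hIco]
              _ ≤ useq (i-n) := sum_aseq_le n (i-n)
          · calc (∑ r ∈ Ico (i-n) i, aseq r)
                = ∑ r ∈ Ico (i-n) ((i-n)+n), aseq r := by rw [← hIco]
              _ ≤ (n:ℝ) * ((rep (i-n)).1 : ℝ)⁻¹ := sum_aseq_le_card n (i-n)
        have h1 : Real.exp ((∑ r ∈ Ico (i-n) i, aseq r) * p) ≤ Real.exp (v n * p) :=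
          Real.exp_le_exp.2 (mul_le_mul_of_nonneg_right hSv hppos.le)
        refine h1.trans ?_
        have hcvx := convexOn_exp.2 (Set.mem_univ (0:ℝ)) (Set.mem_univ p)
          (by linarith [hv1 n] : 0 ≤ 1 - v n) (hv0 n) (by ring)
        simp only [smul_eq_mul, mul_zero, zero_add, Real.exp_zero] at hcvx
        calc Real.exp (v n * p) ≤ (1 - v n) * 1 + v n * Real.exp p := hcvx
          _ = 1 + v n * (Real.exp p - 1) := by ring
      -- sum of v bound
      have hvsum : ∑ n ∈ Icc 1 M, v n ≤ (3/4) * M := by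
        set b := (rep i).1 with hbdef
        set k := (rep i).2 with hkdef
        have hkb : k ≤ b := rep_le i
        have hb2 : 2 ≤ b := rep_two_le i
        have hbR : (2:ℝ) ≤ (b:ℝ) := by exact_mod_cast hb2
        have hsmall : ∀ m : ℕ, m ≤ k → m ≤ M → ∑ n ∈ Icc 1 m, v n ≤ (3/4) * m := by
          intro m hmk hmM
          have hstep : ∀ n ∈ Icc 1 m, v n ≤ (n:ℝ) * (b:ℝ)⁻¹ := by
            intro n hn
            obtain ⟨hn1, hnm⟩ := mem_Icc.1 hn
            have hrs : rep (i - n) = (b, k - n) := rep_sub n (hnm.trans hmk)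
            refine (min_le_right _ _).trans ?_
            rw [hrs]
          calc ∑ n ∈ Icc 1 m, v n ≤ ∑ n ∈ Icc 1 m, (n:ℝ) * (b:ℝ)⁻¹ :=
                Finset.sum_le_sum hstep
            _ = (∑ n ∈ Icc 1 m, (n:ℝ)) * (b:ℝ)⁻¹ := by rw [Finset.sum_mul]
            _ = (m:ℝ)*((m:ℝ)+1)/2 * (b:ℝ)⁻¹ := by rw [sum_Icc_id_real]
            _ ≤ (3/4) * m := by
                have hm1 : ((m:ℝ)+1) ≤ (b:ℝ)+1 := by
                  have : (m:ℝ) ≤ (b:ℝ) := by exact_mod_cast hmk.trans hkb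
                  linarith
                have hm0 : (0:ℝ) ≤ (m:ℝ) := by positivity
                rw [← div_eq_mul_inv, div_le_iff₀ (by linarith : (0:ℝ) < (b:ℝ))]
                nlinarith [mul_le_mul_of_nonneg_left hm1 hm0,
                  mul_nonneg hm0 (by linarith : (0:ℝ) ≤ (b:ℝ) - 2)]
        by_cases hcase : M ≤ k
        · exact hsmall M hcase le_rfl
        · push_neg at hcase
          have hsplit : ∑ n ∈ Icc 1 M, v n
              = ∑ n ∈ Icc 1 k, v n + ∑ n ∈ Ioc k M, v n := by
            have e1 : Icc 1 M = Ioc 0 M := by ext x; simp only [mem_Icc, mem_Ioc]; omega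
            have e2 : Icc 1 k = Ioc 0 k := by ext x; simp only [mem_Icc, mem_Ioc]; omega
            rw [e1, e2, Finset.sum_Ioc_consecutive _ (Nat.zero_le k) hcase.le]
          rw [hsplit]
          have hpart1 : ∑ n ∈ Icc 1 k, v n ≤ (3/4) * k :=
            hsmall k le_rfl (by omega)
          have hpart2 : ∑ n ∈ Ioc k M, v n ≤ ((M:ℝ) - k)/2 := by
            have hstep : ∀ n ∈ Ioc k M, v n ≤ useq (i - n) := by
              intro n _; exact min_le_left _ _
            have hre : ∑ n ∈ Ioc k M, useq (i - n) = ∑ q ∈ Ico (i-M) (i-k), useq q := by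
              apply Finset.sum_nbij' (fun n => i - n) (fun q => i - q)
              · intro a ha
                simp only [mem_Ioc] at ha
                simp only [mem_Ico]
                omega
              · intro a ha
                simp only [mem_Ico] at ha
                simp only [mem_Ioc]
                omega
              · intro a ha
                simp only [mem_Ioc] at ha
                omega
              · intro a ha
                simp only [mem_Ico] at ha
                omega
              · intro a _
                rfl
            have hIc : i - k = (i - M) + (M - k) := by omega
            have hval : ∑ q ∈ Ico (i-M) (i-k), useq q
                = ((M-k : ℕ):ℝ)/2 + phi (i-M) - phi (i-k) := by
              rw [hIc, sum_useq]
            have hphik : phi (i-k) = 0 := by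
              apply phi_eq_zero
              have : rep (i - k) = (b, k - k) := rep_sub k le_rfl
              rw [this]
              simp
            have hphiM : phi (i-M) ≤ 0 := phi_nonpos _
            have hcast : ((M-k : ℕ):ℝ) = (M:ℝ) - (k:ℝ) := by
              have : k ≤ M := by omega
              push_cast [Nat.cast_sub this]
              ring
            calc ∑ n ∈ Ioc k M, v n ≤ ∑ n ∈ Ioc k M, useq (i - n) :=
                  Finset.sum_le_sum hstep
              _ = ∑ q ∈ Ico (i-M) (i-k), useq q := hre
              _ = ((M-k : ℕ):ℝ)/2 + phi (i-M) - phi (i-k) := hval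
              _ ≤ ((M:ℝ) - k)/2 := by rw [hcast]; linarith
          have hkM : (k:ℝ) ≤ (M:ℝ) := by exact_mod_cast hcase.le
          have hk0 : (0:ℝ) ≤ (k:ℝ) := by positivity
          linarith
      -- combine
      have hsumall : ∑ n ∈ Icc 1 M, |∏ j ∈ Finset.Icc 1 n, w (i - j)| ^ p
          ≤ (M:ℝ) * C := by
        calc ∑ n ∈ Icc 1 M, |∏ j ∈ Finset.Icc 1 n, w (i - j)| ^ p
            ≤ ∑ n ∈ Icc 1 M, (1 + v n * (Real.exp p - 1)) := Finset.sum_le_sum hterm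
          _ = (M:ℝ) + (∑ n ∈ Icc 1 M, v n) * (Real.exp p - 1) := by
              rw [Finset.sum_add_distrib, Finset.sum_const, Nat.card_Icc,
                ← Finset.sum_mul]
              simp [nsmul_eq_mul]
          _ ≤ (M:ℝ) + ((3/4) * M) * (Real.exp p - 1) := by
              have h1 : Real.exp p - 1 ≥ 0 := by linarith
              nlinarith [hvsum]
          _ = (M:ℝ) * C := by rw [hCdef]; ring
      have hN1 : (1:ℝ) ≤ (N:ℝ) := by exact_mod_cast hN
      have hNpos : (0:ℝ) < (N:ℝ) := by linarith
      have hMN' : (M:ℝ) ≤ (N:ℝ) := by exact_mod_cast hMN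
      rw [one_div_mul_eq_div, div_le_iff₀ hNpos]
      calc ∑ n ∈ Icc 1 M, |∏ j ∈ Finset.Icc 1 n, w (i - j)| ^ p ≤ (M:ℝ) * C := hsumall
        _ ≤ C * (N:ℝ) := by nlinarith
    refine lt_of_le_of_lt ?_ hClt
    apply Real.iSup_le _ hC0
    intro i
    apply Real.iSup_le _ hC0
    intro N
    by_cases hN : 1 ≤ N
    · rw [ciSup_pos hN]
      exact hmain i N hN
    · haveI : IsEmpty (1 ≤ N) := ⟨fun h => hN h⟩
      rw [Real.iSup_of_isEmpty]
      exact hC0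
end
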